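/- arXiv:1302.1741 — 4 statements merged into one kernel-verified Lean document; each statement's English description precedes it below -/
import Mathlib

section
/- For every real α with 0 < α < 1/2 and every ε > 0, there exists C such that for all integers c ≥ C and all integers k with αc < k < (1−α)c, the angle θ_{k,c} = arccos(x_{k,c}) satisfies |θ_{k,c} − (π − πk/c)| < ε. (In short: θ_{k,c} = π − πk/c + o(1) as c → ∞, uniformly over k in the range αc < k < (1−α)c.) -/
open Real

/-- The `c`-th Legendre polynomial, `P_c(x) = (1/(2^c c!)) (d/dx)^c (x² − 1)^c`,
viewed as a real function. -/
noncomputable def legendreP (c : ℕ) (t : ℝ) : ℝ :=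
  (1 / (2 ^ c * (Nat.factorial c : ℝ))) *
    iteratedDeriv c (fun s : ℝ => (s ^ 2 - 1) ^ c) t

/-- `x : ℕ → ℕ → ℝ` enumerates, for each `c ≥ 1`, the roots of the `c`-th Legendre
polynomial in `(−1, 1)` in increasing order: `x k c` is the `k`-th root
`x_{k,c}` (for `1 ≤ k ≤ c`), these are roots lying in `(−1,1)`, they are strictly
increasing in `k`, and every root of `P_c` in `(−1,1)` occurs among them. -/
def IsLegendreRootSystem (x : ℕ → ℕ → ℝ) : Prop :=
  ∀ c : ℕ, 1 ≤ c →
    (∀ k : ℕ, 1 ≤ k → k ≤ c → x k c ∈ Set.Ioo (-1 : ℝ) 1 ∧ legendreP c (x k c) = 0) ∧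
    (∀ k l : ℕ, 1 ≤ k → k < l → l ≤ c → x k c < x l c) ∧
    (∀ t ∈ Set.Ioo (-1 : ℝ) 1, legendreP c t = 0 → ∃ k : ℕ, 1 ≤ k ∧ k ≤ c ∧ x k c = t)

section LegendreAux
open Polynomial

noncomputable def Lpoly (c : ℕ) : Polynomial ℝ :=
  Polynomial.C (1 / (2 ^ c * (Nat.factorial c : ℝ))) *
    Polynomial.derivative^[c] ((Polynomial.X ^ 2 - 1) ^ c)

lemma iteratedDeriv_polyeval (n : ℕ) (p : Polynomial ℝ) :
    iteratedDeriv n (fun s : ℝ => p.eval s) = fun s => (Polynomial.derivative^[n] p).eval s := by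
  induction n generalizing p with
  | zero => simp
  | succ n ih =>
    rw [iteratedDeriv_succ']
    have h : deriv (fun s : ℝ => p.eval s) = fun s => (derivative p).eval s := by
      funext s; exact (p.hasDerivAt s).deriv
    rw [h, ih, Function.iterate_succ_apply]

lemma legendreP_eq (c : ℕ) (t : ℝ) : legendreP c t = (Lpoly c).eval t := by
  have h : (fun s : ℝ => (s ^ 2 - 1) ^ c) = fun s : ℝ => ((X ^ 2 - 1 : ℝ[X]) ^ c).eval s := by
    funext s; simp
  rw [legendreP, h, iteratedDeriv_polyeval, Lpoly]
  simp

lemma leib_X (n : ℕ) (u : ℝ[X]) :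
    derivative^[n + 1] (X * u) =
      X * derivative^[n + 1] u + ((n + 1 : ℕ) : ℝ[X]) * derivative^[n] u := by
  induction n generalizing u with
  | zero => simp [derivative_mul]; ring
  | succ n ih =>
    rw [Function.iterate_succ_apply' derivative (n + 1) (X * u), ih]
    simp only [derivative_add, derivative_mul, derivative_X, derivative_natCast,
      derivative_one, Nat.succ_eq_add_one]
    rw [← Function.iterate_succ_apply' derivative (n + 1) u,
      ← Function.iterate_succ_apply' derivative n u]
    push_cast
    ring

lemma leib_X2 (n : ℕ) (u : ℝ[X]) :
    derivative^[n + 2] ((X ^ 2 - 1) * u) =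
      (X ^ 2 - 1) * derivative^[n + 2] u
        + ((2 * (n + 2) : ℕ) : ℝ[X]) * (X * derivative^[n + 1] u)
        + (((n + 2) * (n + 1) : ℕ) : ℝ[X]) * derivative^[n] u := by
  induction n generalizing u with
  | zero =>
    show derivative (derivative _) = _
    simp [derivative_mul, derivative_pow, map_ofNat]
    push_cast
    ring
  | succ n ih =>
    rw [Function.iterate_succ_apply' derivative (n + 2) ((X ^ 2 - 1) * u), ih]
    simp only [derivative_add, derivative_mul, derivative_X, derivative_natCast,
      derivative_one, derivative_sub, derivative_pow, Nat.succ_eq_add_one, map_ofNat]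
    rw [← Function.iterate_succ_apply' derivative (n + 2) u,
      ← Function.iterate_succ_apply' derivative (n + 1) u,
      ← Function.iterate_succ_apply' derivative n u]
    simp only [Nat.succ_eq_add_one, Polynomial.C_eq_natCast,
      show 1 + n = n + 1 from Nat.add_comm 1 n,
      show 2 + n = n + 2 from Nat.add_comm 2 n,
      show 3 + n = n + 3 from Nat.add_comm 3 n,
      show n + 1 + 1 = n + 2 from rfl, show n + 2 + 1 = n + 3 from rfl]
    push_cast
    ring

lemma legendre_ode (c : ℕ) (hc : 1 ≤ c) (y : ℝ) :
    (y ^ 2 - 1) * (derivative (derivative (Lpoly c))).eval y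
      + 2 * y * (derivative (Lpoly c)).eval y
      = (c : ℝ) * ((c : ℝ) + 1) * (Lpoly c).eval y := by
  obtain ⟨m, rfl⟩ : ∃ m, c = m + 1 := ⟨c - 1, by omega⟩
  set f : ℝ[X] := (X ^ 2 - 1) ^ (m + 1) with hf
  have hder : derivative ((X : ℝ[X]) ^ 2 - 1) = 2 * X := by
    simp [derivative_pow, map_ofNat]
  have h1 : (X ^ 2 - 1) * derivative f = ((2 * (m + 1) : ℕ) : ℝ[X]) * (X * f) := by
    rw [hf, derivative_pow, hder, Polynomial.C_eq_natCast, Nat.add_sub_cancel]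
    push_cast
    rw [pow_succ]
    ring
  have h2 := congrArg (fun p => derivative^[m + 2] p) h1
  rw [leib_X2 m (derivative f), Polynomial.iterate_derivative_natCast_mul,
    leib_X (m + 1) f,
    ← Function.iterate_succ_apply derivative (m + 2) f,
    ← Function.iterate_succ_apply derivative (m + 1) f,
    ← Function.iterate_succ_apply derivative m f] at h2
  simp only [Nat.succ_eq_add_one] at h2
  set g : ℝ[X] := derivative^[m + 1] f with hg
  have e1 : derivative^[m + 2 + 1] f = derivative (derivative g) := by
    rw [hg, ← Function.iterate_succ_apply' derivative (m + 1) f,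
      ← Function.iterate_succ_apply' derivative (m + 2) f]
  have e2 : derivative^[m + 1 + 1] f = derivative g := by
    rw [hg, ← Function.iterate_succ_apply' derivative (m + 1) f]
  rw [e1, e2] at h2
  have h3 := congrArg (Polynomial.eval y) h2
  simp only [eval_mul, eval_add, eval_sub, eval_pow, eval_X, eval_one, eval_natCast] at h3
  have hL : Lpoly (m + 1) = C (1 / (2 ^ (m + 1) * (Nat.factorial (m + 1) : ℝ))) * g := by
    rw [Lpoly, hg, hf]
  rw [hL, derivative_C_mul, derivative_C_mul]
  simp only [eval_mul, eval_C]
  push_cast at h3 ⊢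
  linear_combination (1 / (2 ^ (m + 1) * (Nat.factorial (m + 1) : ℝ))) * h3

noncomputable def uu (c : ℕ) (θ : ℝ) : ℝ :=
  Real.sqrt (Real.sin θ) * (Lpoly c).eval (Real.cos θ)

noncomputable def uu1 (c : ℕ) (θ : ℝ) : ℝ :=
  Real.cos θ / (2 * Real.sqrt (Real.sin θ)) * (Lpoly c).eval (Real.cos θ)
    - Real.sqrt (Real.sin θ) * Real.sin θ * (derivative (Lpoly c)).eval (Real.cos θ)

noncomputable def qq (c : ℕ) (θ : ℝ) : ℝ :=
  ((c : ℝ) + 1 / 2) ^ 2 + 1 / (4 * Real.sin θ ^ 2)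

lemma hasDerivAt_uu (c : ℕ) (θ : ℝ) (h : 0 < Real.sin θ) :
    HasDerivAt (uu c) (uu1 c θ) θ := by
  have hs : Real.sqrt (Real.sin θ) ≠ 0 := (Real.sqrt_pos.mpr h).ne'
  have hsq : HasDerivAt (fun t => Real.sqrt (Real.sin t))
      (Real.cos θ / (2 * Real.sqrt (Real.sin θ))) θ :=
    (Real.hasDerivAt_sin θ).sqrt h.ne'
  have hP : HasDerivAt (fun t => (Lpoly c).eval (Real.cos t))
      ((derivative (Lpoly c)).eval (Real.cos θ) * (-Real.sin θ)) θ :=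
    ((Lpoly c).hasDerivAt (Real.cos θ)).comp θ (Real.hasDerivAt_cos θ)
  have := hsq.mul hP
  refine this.congr_deriv (Eq.symm ?_)
  unfold uu1
  field_simp
  ring

lemma hasDerivAt_uu1 (c : ℕ) (hc : 1 ≤ c) (θ : ℝ) (h : 0 < Real.sin θ) :
    HasDerivAt (uu1 c) (-(qq c θ) * uu c θ) θ := by
  have hs : Real.sqrt (Real.sin θ) ≠ 0 := (Real.sqrt_pos.mpr h).ne'
  have hs2 : Real.sqrt (Real.sin θ) ^ 2 = Real.sin θ := Real.sq_sqrt h.le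
  have hsq : HasDerivAt (fun t => Real.sqrt (Real.sin t))
      (Real.cos θ / (2 * Real.sqrt (Real.sin θ))) θ :=
    (Real.hasDerivAt_sin θ).sqrt h.ne'
  have hP : HasDerivAt (fun t => (Lpoly c).eval (Real.cos t))
      ((derivative (Lpoly c)).eval (Real.cos θ) * (-Real.sin θ)) θ :=
    ((Lpoly c).hasDerivAt (Real.cos θ)).comp θ (Real.hasDerivAt_cos θ)
  have hP1 : HasDerivAt (fun t => (derivative (Lpoly c)).eval (Real.cos t))
      ((derivative (derivative (Lpoly c))).eval (Real.cos θ) * (-Real.sin θ)) θ :=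
    ((derivative (Lpoly c)).hasDerivAt (Real.cos θ)).comp θ (Real.hasDerivAt_cos θ)
  have hden : HasDerivAt (fun t => 2 * Real.sqrt (Real.sin t))
      (2 * (Real.cos θ / (2 * Real.sqrt (Real.sin θ)))) θ := hsq.const_mul 2
  have hden0 : 2 * Real.sqrt (Real.sin θ) ≠ 0 := by positivity
  have h1 : HasDerivAt (fun t => Real.cos t / (2 * Real.sqrt (Real.sin t)))
      ((-Real.sin θ * (2 * Real.sqrt (Real.sin θ)) -
        Real.cos θ * (2 * (Real.cos θ / (2 * Real.sqrt (Real.sin θ))))) /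
          (2 * Real.sqrt (Real.sin θ)) ^ 2) θ :=
    (Real.hasDerivAt_cos θ).div hden hden0
  have hterm1 := h1.mul hP
  have hss : HasDerivAt (fun t => Real.sqrt (Real.sin t) * Real.sin t)
      (Real.cos θ / (2 * Real.sqrt (Real.sin θ)) * Real.sin θ +
        Real.sqrt (Real.sin θ) * Real.cos θ) θ := hsq.mul (Real.hasDerivAt_sin θ)
  have hterm2 := hss.mul hP1
  have hfin := hterm1.sub hterm2
  refine hfin.congr_deriv (Eq.symm ?_)
  have hode := legendre_ode c hc (Real.cos θ)
  have hpy : Real.sin θ ^ 2 + Real.cos θ ^ 2 = 1 := Real.sin_sq_add_cos_sq θ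
  unfold qq uu
  rw [← hs2] at hpy ⊢
  set s := Real.sqrt (Real.sin θ) with hsdef
  set e0 := (Lpoly c).eval (Real.cos θ) with he0
  set e1 := (derivative (Lpoly c)).eval (Real.cos θ) with he1
  set e2 := (derivative (derivative (Lpoly c))).eval (Real.cos θ) with he2
  rw [show Real.sqrt (s ^ 2) = s from Real.sqrt_sq (Real.sqrt_nonneg (Real.sin θ))]
  linear_combination (norm := (field_simp; ring1)) s * hode + (e0 / (4 * s ^ 3) - s * e2) * hpy

/-- Core Sturm: if `u > 0` on `[a, a+π/m]` and `u'' = -q u` with `q ≥ m²`, contradiction. -/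
lemma sturm_core {u u' q : ℝ → ℝ} {a m : ℝ} (hm : 0 < m)
    (hu : ∀ θ ∈ Set.Icc a (a + π / m), HasDerivAt u (u' θ) θ)
    (hu' : ∀ θ ∈ Set.Icc a (a + π / m), HasDerivAt u' (-(q θ) * u θ) θ)
    (hq : ∀ θ ∈ Set.Icc a (a + π / m), m ^ 2 ≤ q θ)
    (hpos : ∀ θ ∈ Set.Icc a (a + π / m), 0 < u θ) : False := by
  set b := a + π / m with hb
  have hab : a < b := by
    have h0 : 0 < π / m := div_pos pi_pos hm
    rw [hb]; linarith
  set v : ℝ → ℝ := fun θ => Real.sin (m * (θ - a)) with hv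
  set v' : ℝ → ℝ := fun θ => m * Real.cos (m * (θ - a)) with hv'
  have hvd : ∀ θ : ℝ, HasDerivAt v (v' θ) θ := by
    intro θ
    have h1 : HasDerivAt (fun θ : ℝ => m * (θ - a)) m θ := by
      simpa using ((hasDerivAt_id θ).sub_const a).const_mul m
    exact ((Real.hasDerivAt_sin (m * (θ - a))).comp θ h1).congr_deriv (mul_comm _ _)
  have hvd' : ∀ θ : ℝ, HasDerivAt v' (-(m ^ 2) * v θ) θ := by
    intro θ
    have h1 : HasDerivAt (fun θ : ℝ => m * (θ - a)) m θ := by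
      simpa using ((hasDerivAt_id θ).sub_const a).const_mul m
    have h2 := ((Real.hasDerivAt_cos (m * (θ - a))).comp θ h1).const_mul m
    refine h2.congr_deriv (Eq.symm ?_)
    simp [hv]
    ring
  have hvnn : ∀ θ ∈ Set.Icc a b, 0 ≤ v θ := by
    intro θ hθ
    apply Real.sin_nonneg_of_nonneg_of_le_pi
    · have := hθ.1; nlinarith
    · have h2 := hθ.2
      rw [hb] at h2
      calc m * (θ - a) ≤ m * (π / m) := by
            apply mul_le_mul_of_nonneg_left _ hm.le
            linarith
        _ = π := by field_simp
  set W : ℝ → ℝ := fun θ => u θ * v' θ - u' θ * v θ with hW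
  have hWd : ∀ θ ∈ Set.Icc a b, HasDerivAt W ((q θ - m ^ 2) * (u θ * v θ)) θ := by
    intro θ hθ
    have h5 : HasDerivAt W (u' θ * v' θ + u θ * (-(m ^ 2) * v θ)
        - (-(q θ) * u θ * v θ + u' θ * v' θ)) θ := by
      exact (((hu θ hθ).mul (hvd' θ))).sub (((hu' θ hθ).mul (hvd θ)))
    convert h5 using 1
    ring
  have hmono : MonotoneOn W (Set.Icc a b) := by
    apply monotoneOn_of_deriv_nonneg (convex_Icc a b)
    · intro θ hθ
      exact ((hWd θ hθ).continuousAt).continuousWithinAt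
    · intro θ hθ
      rw [interior_Icc] at hθ
      exact ((hWd θ (Set.mem_Icc_of_Ioo hθ)).differentiableAt).differentiableWithinAt
    · intro θ hθ
      rw [interior_Icc] at hθ
      have hθ' := Set.mem_Icc_of_Ioo hθ
      rw [(hWd θ hθ').deriv]
      exact mul_nonneg (sub_nonneg.mpr (hq θ hθ')) (mul_nonneg (hpos θ hθ').le (hvnn θ hθ'))
  have hWa : W a = m * u a := by
    simp [hW, hv, hv']
    ring
  have hWb : W b = -m * u b := by
    have h1 : m * (b - a) = π := by
      rw [hb]; field_simp; ring
    simp [hW, hv, hv', h1]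
    ring
  have ha : a ∈ Set.Icc a b := Set.left_mem_Icc.mpr hab.le
  have hbb : b ∈ Set.Icc a b := Set.right_mem_Icc.mpr hab.le
  have := hmono ha hbb hab.le
  rw [hWa, hWb] at this
  nlinarith [hpos a ha, hpos b hbb]


lemma exists_root_poly (c : ℕ) (hc : 1 ≤ c) {a : ℝ} (ha : 0 < a)
    (hb : a + π / ((c : ℝ) + 1 / 2) < π) :
    ∃ θ ∈ Set.Icc a (a + π / ((c : ℝ) + 1 / 2)), (Lpoly c).eval (Real.cos θ) = 0 := by
  set m : ℝ := (c : ℝ) + 1 / 2 with hmdef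
  have hm : 0 < m := by positivity
  set b : ℝ := a + π / m with hbdef
  have hab : a < b := by
    have : 0 < π / m := div_pos pi_pos hm
    rw [hbdef]; linarith
  have hsin : ∀ θ ∈ Set.Icc a b, 0 < Real.sin θ := fun θ hθ =>
    Real.sin_pos_of_pos_of_lt_pi (lt_of_lt_of_le ha hθ.1) (lt_of_le_of_lt hθ.2 hb)
  by_contra hcon
  push_neg at hcon
  have hune : ∀ θ ∈ Set.Icc a b, uu c θ ≠ 0 := by
    intro θ hθ
    exact mul_ne_zero (Real.sqrt_pos.mpr (hsin θ hθ)).ne' (hcon θ hθ)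
  have hq : ∀ θ ∈ Set.Icc a b, m ^ 2 ≤ qq c θ := by
    intro θ hθ
    have h1 := hsin θ hθ
    have h2 : 0 < 1 / (4 * Real.sin θ ^ 2) := by positivity
    rw [qq, hmdef]
    linarith
  have hu : ∀ θ ∈ Set.Icc a b, HasDerivAt (uu c) (uu1 c θ) θ :=
    fun θ hθ => hasDerivAt_uu c θ (hsin θ hθ)
  have hu1 : ∀ θ ∈ Set.Icc a b, HasDerivAt (uu1 c) (-(qq c θ) * uu c θ) θ :=
    fun θ hθ => hasDerivAt_uu1 c hc θ (hsin θ hθ)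
  have hcont : ContinuousOn (uu c) (Set.Icc a b) :=
    fun θ hθ => ((hu θ hθ).continuousAt).continuousWithinAt
  by_cases hall : ∀ θ ∈ Set.Icc a b, 0 < uu c θ
  · exact sturm_core hm hu hu1 hq hall
  · push_neg at hall
    obtain ⟨θ0, hθ0, hle⟩ := hall
    have hneg0 : uu c θ0 < 0 := lt_of_le_of_ne hle (hune θ0 hθ0)
    have hneg : ∀ θ ∈ Set.Icc a b, uu c θ < 0 := by
      intro θ1 hθ1
      by_contra hge
      push_neg at hge
      have hpos1 : 0 < uu c θ1 := lt_of_le_of_ne hge (Ne.symm (hune θ1 hθ1))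
      have hsub : Set.uIcc θ0 θ1 ⊆ Set.Icc a b := by
        exact Set.uIcc_subset_Icc hθ0 hθ1
      have hivt := intermediate_value_uIcc (hcont.mono hsub)
      have h0 : (0 : ℝ) ∈ Set.uIcc (uu c θ0) (uu c θ1) :=
        Set.mem_uIcc.mpr (Or.inl ⟨hneg0.le, hpos1.le⟩)
      obtain ⟨z, hz, hz0⟩ := hivt h0
      exact hune z (hsub hz) hz0
    have hu' : ∀ θ ∈ Set.Icc a b, HasDerivAt (fun t => -(uu c t)) (-(uu1 c θ)) θ :=
      fun θ hθ => (hu θ hθ).neg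
    have hu1' : ∀ θ ∈ Set.Icc a b,
        HasDerivAt (fun t => -(uu1 c t)) (-(qq c θ) * -(uu c θ)) θ := by
      intro θ hθ
      have := (hu1 θ hθ).neg
      refine this.congr_deriv ?_
      ring
    exact sturm_core hm hu' hu1' hq (fun θ hθ => neg_pos.mpr (hneg θ hθ))

lemma exists_root (c : ℕ) (hc : 1 ≤ c) {a : ℝ} (ha : 0 < a)
    (hb : a + π / ((c : ℝ) + 1 / 2) < π) :
    ∃ θ ∈ Set.Icc a (a + π / ((c : ℝ) + 1 / 2)), legendreP c (Real.cos θ) = 0 := by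
  obtain ⟨θ, h1, h2⟩ := exists_root_poly c hc ha hb
  exact ⟨θ, h1, by rw [legendreP_eq]; exact h2⟩

open Finset in
lemma many_roots (x : ℕ → ℕ → ℝ) (hx : IsLegendreRootSystem x) (c : ℕ) (hc : 1 ≤ c)
    (n : ℕ) (a b : ℝ) (ha : 0 < a) (hb : b < π)
    (hlen : (n : ℝ) * (π / ((c : ℝ) + 1 / 2)) < b - a) :
    n ≤ ((Finset.Icc 1 c).filter
      (fun j => Real.arccos (x j c) ∈ Set.Icc a b)).card := by
  classical
  rcases Nat.eq_zero_or_pos n with rfl | hn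
  · simp
  set m : ℝ := (c : ℝ) + 1 / 2 with hmdef
  have hm : 0 < m := by positivity
  have hpim : 0 < π / m := div_pos pi_pos hm
  set d : ℝ := (b - a) / n with hddef
  have hnR : (0 : ℝ) < n := by exact_mod_cast hn
  have hdm : π / m < d := by
    rw [hddef, lt_div_iff₀ hnR]
    linarith [hlen]
  have hd : 0 < d := lt_trans hpim hdm
  -- for each j < n there is a root in [a + j*d, a + j*d + π/m]
  have hroots : ∀ j : ℕ, j < n →
      ∃ θ ∈ Set.Icc (a + j * d) (a + j * d + π / m), legendreP c (Real.cos θ) = 0 := by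
    intro j hj
    apply exists_root c hc
    · positivity
    · have hj1 : (j : ℝ) ≤ (n : ℝ) - 1 := by
        have : (j : ℝ) + 1 ≤ n := by exact_mod_cast hj
        linarith
      have : a + (j : ℝ) * d + π / m < a + (j : ℝ) * d + d := by linarith
      have h2 : a + (j : ℝ) * d + d ≤ a + (n : ℝ) * d := by nlinarith
      have h3 : a + (n : ℝ) * d = b := by
        rw [hddef]; field_simp; ring
      linarith
  choose θf hθf hzero using hroots
  -- bounds on θf
  have hθmem : ∀ j (hj : j < n), θf j hj ∈ Set.Icc a b := by
    intro j hj
    obtain ⟨h1, h2⟩ := hθf j hj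
    constructor
    · have : (0:ℝ) ≤ (j : ℝ) * d := by positivity
      linarith
    · have hj1 : (j : ℝ) ≤ (n : ℝ) - 1 := by
        have : (j : ℝ) + 1 ≤ n := by exact_mod_cast hj
        linarith
      have h3 : a + (n : ℝ) * d = b := by rw [hddef]; field_simp; ring
      nlinarith
  have hθpos : ∀ j (hj : j < n), 0 < θf j hj ∧ θf j hj < π := by
    intro j hj
    exact ⟨lt_of_lt_of_le ha (hθmem j hj).1, lt_of_le_of_lt (hθmem j hj).2 hb⟩
  -- map each zero to an index
  have hidx : ∀ j (hj : j < n), ∃ k : ℕ, 1 ≤ k ∧ k ≤ c ∧ x k c = Real.cos (θf j hj) := by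
    intro j hj
    obtain ⟨h0, hπ⟩ := hθpos j hj
    have hcos1 : Real.cos (θf j hj) < 1 := by
      have := Real.cos_lt_cos_of_nonneg_of_le_pi (le_refl 0) hπ.le h0
      simpa using this
    have hcosm1 : -1 < Real.cos (θf j hj) := by
      have := Real.cos_lt_cos_of_nonneg_of_le_pi h0.le (le_refl π) hπ
      simpa using this
    exact (hx c hc).2.2 _ ⟨hcosm1, hcos1⟩ (hzero j hj)
  choose F hF1 hF2 hF3 using hidx
  -- as function on Finset.range n via attach
  have harc : ∀ j (hj : j < n), Real.arccos (x (F j hj) c) = θf j hj := by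
    intro j hj
    rw [hF3 j hj]
    exact Real.arccos_cos (hθpos j hj).1.le (hθpos j hj).2.le
  -- injectivity-based cardinality
  have key : ∀ j (hj : j < n), F j hj ∈ (Finset.Icc 1 c).filter
      (fun j => Real.arccos (x j c) ∈ Set.Icc a b) := by
    intro j hj
    rw [Finset.mem_filter, Finset.mem_Icc]
    refine ⟨⟨hF1 j hj, hF2 j hj⟩, ?_⟩
    rw [harc j hj]
    exact hθmem j hj
  -- strict separation: j < j' implies θf j < θf j'
  have hsep : ∀ j (hj : j < n) j' (hj' : j' < n), j < j' → θf j hj < θf j' hj' := by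
    intro j hj j' hj' hlt
    have h1 := (hθf j hj).2
    have h2 := (hθf j' hj').1
    have hj1 : (j : ℝ) + 1 ≤ (j' : ℝ) := by exact_mod_cast hlt
    have : a + (j : ℝ) * d + π / m < a + (j' : ℝ) * d := by nlinarith
    linarith
  have hinj : ∀ j (hj : j < n) j' (hj' : j' < n), F j hj = F j' hj' → j = j' := by
    intro j hj j' hj' heq
    by_contra hne
    rcases Nat.lt_or_ge j j' with hlt | hge
    · have := hsep j hj j' hj' hlt
      rw [← harc j hj, ← harc j' hj', heq] at this
      exact lt_irrefl _ this
    · have hlt : j' < j := lt_of_le_of_ne hge (Ne.symm hne)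
      have := hsep j' hj' j hj hlt
      rw [← harc j hj, ← harc j' hj', heq] at this
      exact lt_irrefl _ this
  -- conclude via an injection from (range n).attach
  have := Finset.card_le_card_of_injOn
    (f := fun j : {j // j ∈ Finset.range n} => F j.1 (Finset.mem_range.mp j.2))
    (s := (Finset.range n).attach)
    (t := (Finset.Icc 1 c).filter (fun j => Real.arccos (x j c) ∈ Set.Icc a b))
    (fun j _ => key j.1 (Finset.mem_range.mp j.2))
    (by
      intro j _ j' _ heq
      exact Subtype.ext (hinj j.1 (Finset.mem_range.mp j.2) j'.1 (Finset.mem_range.mp j'.2) heq))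
  simpa using this

end LegendreAux

set_option maxHeartbeats 2000000 in
/-- `θ_{k,c} = arccos x_{k,c} = π − πk/c + o(1)` as `c → ∞`, uniformly over `k`
with `αc < k < (1−α)c`. -/
theorem theta_asymptotics (x : ℕ → ℕ → ℝ) (hx : IsLegendreRootSystem x)
    (α : ℝ) (hα0 : 0 < α) (hα1 : α < 1 / 2) (ε : ℝ) (hε : 0 < ε) :
    ∃ C : ℕ, ∀ c : ℕ, C ≤ c → ∀ k : ℕ,
      α * (c : ℝ) < (k : ℝ) → (k : ℝ) < (1 - α) * (c : ℝ) →
      |Real.arccos (x k c) - (π - π * (k : ℝ) / (c : ℝ))| < ε := by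
  classical
  have hπα : 0 < π * α := mul_pos pi_pos hα0
  set ε₀ : ℝ := min (ε / 2) (π * α / 2) with hε₀def
  have hε₀ : 0 < ε₀ := lt_min (by linarith) (by linarith)
  have hε₀ε : ε₀ ≤ ε / 2 := min_le_left _ _
  have hε₀α : ε₀ ≤ π * α / 2 := min_le_right _ _
  obtain ⟨C0, hC0⟩ := exists_nat_gt (4 * π / ε₀)
  refine ⟨C0 + 1, ?_⟩
  intro c hc k hk1 hk2
  have hc1 : 1 ≤ c := by omega
  have hcR : (0 : ℝ) < c := by
    have : (1 : ℝ) ≤ c := by exact_mod_cast hc1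
    linarith
  have hαc : 0 < α * c := mul_pos hα0 hcR
  have hk1' : 1 ≤ k := by
    by_contra hk0
    push_neg at hk0
    interval_cases k
    simp at hk1
    linarith
  have hkcR : (k : ℝ) < c := by nlinarith
  have hkc : k < c := by exact_mod_cast hkcR
  -- π / c < ε₀ / 4
  have hcC : (4 * π / ε₀ : ℝ) < c := by
    have h1 : ((C0 : ℝ)) < c := by
      have : (C0 : ℝ) + 1 ≤ c := by exact_mod_cast hc
      linarith
    linarith
  have hπc : π / c < ε₀ / 4 := by
    rw [div_lt_iff₀ hcR]
    rw [div_lt_iff₀ hε₀] at hcC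
    nlinarith
  set t : ℝ := π - π * k / c with htdef
  have hkca : π * α < π * k / c := by
    rw [lt_div_iff₀ hcR]
    nlinarith
  have hkcb : π * k / c < π - π * α := by
    rw [div_lt_iff₀ hcR]
    nlinarith
  have htα : π * α < t := by rw [htdef]; linarith
  have htβ : t < π - π * α := by rw [htdef]; linarith
  -- strict antitonicity of θ
  have hanti : ∀ i j, 1 ≤ i → i < j → j ≤ c →
      Real.arccos (x j c) < Real.arccos (x i c) := by
    intro i j h1 h2 h3
    have hxi := ((hx c hc1).1 i h1 (le_of_lt (lt_of_lt_of_le h2 h3))).1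
    have hxj := ((hx c hc1).1 j (by omega) h3).1
    have hij := (hx c hc1).2.1 i j h1 h2 h3
    exact Real.strictAntiOn_arccos ⟨hxi.1.le, hxi.2.le⟩ ⟨hxj.1.le, hxj.2.le⟩ hij
  -- upper bound
  have hub : Real.arccos (x k c) ≤ t + ε₀ := by
    by_contra hgt
    push_neg at hgt
    have hcard : (c + 1 - k : ℕ) ≤ ((Finset.Icc 1 c).filter
        (fun j => Real.arccos (x j c) ∈ Set.Icc (ε₀ / 4) (t + ε₀))).card := by
      apply many_roots x hx c hc1
      · linarith
      · linarith
      · have hcast : ((c + 1 - k : ℕ) : ℝ) = (c : ℝ) + 1 - k := by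
          rw [Nat.cast_sub (by omega)]
          push_cast
          ring
        rw [hcast]
        have hm2 : (0 : ℝ) < (c : ℝ) + 1 / 2 := by linarith
        have hkey : ((c : ℝ) + 1 - k) * (π / ((c : ℝ) + 1 / 2)) - (π - π * k / c)
            = π * ((c : ℝ) + k) / (2 * c * ((c : ℝ) + 1 / 2)) := by
          field_simp
          ring
        have hnum : π * ((c : ℝ) + k) ≤ 2 * π * c := by
          nlinarith [mul_le_mul_of_nonneg_left hkcR.le pi_pos.le]
        have hden : 2 * (c : ℝ) * c ≤ 2 * c * ((c : ℝ) + 1 / 2) := by nlinarith [hcR]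
        have hbound : π * ((c : ℝ) + k) / (2 * c * ((c : ℝ) + 1 / 2)) ≤ π / c := by
          have e : (π : ℝ) / c = 2 * π * c / (2 * c * c) := by
            field_simp
          rw [e]
          exact div_le_div₀ (by positivity) hnum (by positivity) hden
        linarith [hkey, hbound, hπc, htdef]
    have hsub : ((Finset.Icc 1 c).filter
        (fun j => Real.arccos (x j c) ∈ Set.Icc (ε₀ / 4) (t + ε₀)))
        ⊆ Finset.Icc (k + 1) c := by
      intro j hj
      rw [Finset.mem_filter, Finset.mem_Icc] at hj
      obtain ⟨⟨hj1, hjc⟩, hmem⟩ := hj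
      rw [Finset.mem_Icc]
      refine ⟨?_, hjc⟩
      by_contra hle
      push_neg at hle
      have hjk : j ≤ k := by omega
      have hθkj : Real.arccos (x k c) ≤ Real.arccos (x j c) := by
        rcases eq_or_lt_of_le hjk with rfl | hlt
        · exact le_refl _
        · exact (hanti j k hj1 hlt hkc.le).le
      have := hmem.2
      linarith
    have hcard2 := Finset.card_le_card hsub
    rw [Nat.card_Icc] at hcard2
    omega
  -- lower bound
  have hlb : t - ε₀ ≤ Real.arccos (x k c) := by
    by_contra hlt
    push_neg at hlt
    have hcard : k ≤ ((Finset.Icc 1 c).filter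
        (fun j => Real.arccos (x j c) ∈ Set.Icc (t - ε₀) (π - ε₀ / 4))).card := by
      apply many_roots x hx c hc1
      · linarith
      · linarith
      · have h1 : (k : ℝ) * (π / ((c : ℝ) + 1 / 2)) ≤ (k : ℝ) * (π / c) := by
          apply mul_le_mul_of_nonneg_left _ (Nat.cast_nonneg k)
          apply div_le_div_of_nonneg_left pi_pos.le hcR
          linarith
        have h2 : (k : ℝ) * (π / c) = π * k / c := by ring
        rw [htdef]
        linarith
    have hsub : ((Finset.Icc 1 c).filter
        (fun j => Real.arccos (x j c) ∈ Set.Icc (t - ε₀) (π - ε₀ / 4)))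
        ⊆ Finset.Icc 1 (k - 1) := by
      intro j hj
      rw [Finset.mem_filter, Finset.mem_Icc] at hj
      obtain ⟨⟨hj1, hjc⟩, hmem⟩ := hj
      rw [Finset.mem_Icc]
      refine ⟨hj1, ?_⟩
      by_contra hle
      push_neg at hle
      have hjk : k ≤ j := by omega
      have hθkj : Real.arccos (x j c) ≤ Real.arccos (x k c) := by
        rcases eq_or_lt_of_le hjk with rfl | hltkj
        · exact le_refl _
        · exact (hanti k j hk1' hltkj hjc).le
      have := hmem.1
      linarith
    have hcard2 := Finset.card_le_card hsub
    rw [Nat.card_Icc] at hcard2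
    omega
  have habs : |Real.arccos (x k c) - (π - π * (k : ℝ) / (c : ℝ))| ≤ ε₀ := by
    rw [← htdef]
    rw [abs_le]
    constructor <;> linarith
  linarith [habs, hε₀ε, hε]
end

section
/- For every real α with 0 < α < 1/2 and every ε > 0, there exists C such that for all integers c ≥ C and all integers k with αc < k < (1−α)c, one has |p_{k,c} − sin²(πk/(2c))| < ε. (In short: p_{k,c} = sin²(πk/(2c)) + o(1) as c → ∞, uniformly over k in the range αc < k < (1−α)c.) -/
open Real

/-- The weight `w_{k,c} = 2 / ((1 − x_{k,c}²)^{3/2} · P_c′(x_{k,c})²)`. -/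
noncomputable def wLeg (x : ℕ → ℕ → ℝ) (k c : ℕ) : ℝ :=
  2 / ((1 - x k c ^ 2) ^ ((3 : ℝ) / 2) * (deriv (legendreP c) (x k c)) ^ 2)

/-- The normalizing constant `N_c = Σ_{k=1}^c w_{k,c}`. -/
noncomputable def NLeg (x : ℕ → ℕ → ℝ) (c : ℕ) : ℝ :=
  ∑ k ∈ Finset.Icc 1 c, wLeg x k c

section LegendrePolynomialFacts
open Polynomial

/-- `k`-th derivative of `(X²−1)^n`. -/
noncomputable def legD (n k : ℕ) : ℝ[X] := derivative^[k] ((X^2 - 1)^n)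

lemma legD_succ (n k : ℕ) : legD n (k+1) = derivative (legD n k) := by
  simp [legD, Function.iterate_succ_apply']

lemma legD_base (n : ℕ) :
    (X^2 - 1) * legD n 1 = C ((2*n : ℕ):ℝ) * X * legD n 0 := by
  cases n with
  | zero => simp [legD]
  | succ m =>
    simp only [legD, Function.iterate_one, Function.iterate_zero, id]
    rw [derivative_pow_succ]
    simp only [derivative_sub, derivative_X_pow, derivative_one, sub_zero]
    push_cast
    simp only [map_add, map_mul, map_one, map_ofNat, map_natCast]
    ring

lemma legF (n k : ℕ) :
    (X^2 - 1) * legD n (k+2) + C ((2*(k+1) : ℕ):ℝ) * X * legD n (k+1)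
      + C (((k+1)*k : ℕ):ℝ) * legD n k
    = C ((2*n : ℕ):ℝ) * X * legD n (k+1) + C ((2*n*(k+1) : ℕ):ℝ) * legD n k := by
  induction k with
  | zero =>
    have h := congrArg derivative (legD_base n)
    rw [derivative_mul, derivative_mul, derivative_mul] at h
    simp only [derivative_sub, derivative_X_pow, derivative_one, sub_zero, derivative_C,
      derivative_X, zero_mul, zero_add, mul_one, ← legD_succ] at h
    push_cast at h ⊢
    simp only [map_add, map_mul, map_one, map_ofNat, map_natCast, map_zero] at h ⊢
    linear_combination h
  | succ k ih =>
    have h := congrArg derivative ih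
    simp only [derivative_add, derivative_mul, derivative_sub, derivative_X_pow,
      derivative_one, sub_zero, derivative_C, derivative_X, zero_mul, zero_add, mul_one,
      ← legD_succ] at h
    push_cast at h ⊢
    simp only [map_add, map_mul, map_one, map_ofNat, map_natCast, map_zero] at h ⊢
    linear_combination h

/-- The Legendre polynomial as a `Polynomial ℝ`. -/
noncomputable def legPoly (n : ℕ) : ℝ[X] :=
  C (1 / (2 ^ n * (Nat.factorial n : ℝ))) * legD n n

lemma iteratedDeriv_eval (p : ℝ[X]) (k : ℕ) :
    iteratedDeriv k (fun s : ℝ => p.eval s) = fun s => (derivative^[k] p).eval s := by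
  induction k with
  | zero => simp
  | succ k ih =>
    rw [iteratedDeriv_succ, ih]
    funext s
    rw [Function.iterate_succ_apply']
    exact Polynomial.deriv _

lemma legendreP_eq_eval (c : ℕ) : legendreP c = fun t => (legPoly c).eval t := by
  funext t
  have h : (fun s : ℝ => (s ^ 2 - 1) ^ c) = fun s => ((X^2-1)^c : ℝ[X]).eval s := by
    funext s; simp
  rw [legendreP, h, iteratedDeriv_eval]
  simp [legPoly, legD]

lemma legPoly_ode (n : ℕ) (t : ℝ) :
    (1 - t^2) * (derivative (derivative (legPoly n))).eval t
      = 2*t*(derivative (legPoly n)).eval t - ((n:ℝ)*(n+1)) * (legPoly n).eval t := by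
  have h := congrArg (eval t) (legF n n)
  simp only [eval_add, eval_mul, eval_sub, eval_pow, eval_X, eval_one, eval_C] at h
  have e2 : derivative (derivative (legPoly n)) = C (1 / (2 ^ n * (Nat.factorial n : ℝ))) *
      legD n (n+2) := by
    simp [legPoly, legD_succ, derivative_mul]
  have e1 : derivative (legPoly n) = C (1 / (2 ^ n * (Nat.factorial n : ℝ))) *
      legD n (n+1) := by
    simp [legPoly, legD_succ, derivative_mul]
  rw [e2, e1, legPoly]
  simp only [eval_mul, eval_C]
  push_cast at h ⊢
  linear_combination (-(1 / (2 ^ n * (Nat.factorial n : ℝ)))) * h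

/-- `g(θ) = P_n(cos θ)`. -/
noncomputable def gfun (n : ℕ) (θ : ℝ) : ℝ := (legPoly n).eval (Real.cos θ)

noncomputable def g1fun (n : ℕ) (θ : ℝ) : ℝ :=
  -Real.sin θ * (derivative (legPoly n)).eval (Real.cos θ)

noncomputable def g2fun (n : ℕ) (θ : ℝ) : ℝ :=
  Real.cos θ * (derivative (legPoly n)).eval (Real.cos θ)
    - ((n:ℝ)*(n+1)) * (legPoly n).eval (Real.cos θ)

lemma hasDerivAt_gfun (n : ℕ) (θ : ℝ) : HasDerivAt (gfun n) (g1fun n θ) θ := by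
  have h := ((legPoly n).hasDerivAt (Real.cos θ)).comp θ (Real.hasDerivAt_cos θ)
  refine h.congr_deriv (Eq.symm ?_)
  simp [g1fun]; ring

lemma hasDerivAt_g1fun (n : ℕ) (θ : ℝ) : HasDerivAt (g1fun n) (g2fun n θ) θ := by
  have h1 := ((derivative (legPoly n)).hasDerivAt (Real.cos θ)).comp θ (Real.hasDerivAt_cos θ)
  have h2 := ((Real.hasDerivAt_sin θ).neg).mul h1
  refine h2.congr_deriv (Eq.symm ?_)
  have ode := legPoly_ode n (Real.cos θ)
  have hpy : Real.sin θ ^ 2 + Real.cos θ ^ 2 = 1 := Real.sin_sq_add_cos_sq θ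
  simp only [g2fun, Function.comp, Pi.neg_apply]
  linear_combination (-1) * ode - eval (Real.cos θ) (derivative (derivative (legPoly n))) * hpy

/-- `u(θ) = √(sin θ) · P_n(cos θ)`. -/
noncomputable def ufun (n : ℕ) (θ : ℝ) : ℝ := Real.sqrt (Real.sin θ) * gfun n θ

noncomputable def u1fun (n : ℕ) (θ : ℝ) : ℝ :=
  Real.cos θ / (2 * Real.sqrt (Real.sin θ)) * gfun n θ + Real.sqrt (Real.sin θ) * g1fun n θ

lemma hasDerivAt_sqrtsin {θ : ℝ} (hθ : θ ∈ Set.Ioo 0 π) :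
    HasDerivAt (fun t => Real.sqrt (Real.sin t)) (Real.cos θ / (2 * Real.sqrt (Real.sin θ))) θ := by
  have hs : 0 < Real.sin θ := Real.sin_pos_of_pos_of_lt_pi hθ.1 hθ.2
  have h := (Real.hasDerivAt_sqrt hs.ne').comp θ (Real.hasDerivAt_sin θ)
  refine h.congr_deriv (Eq.symm ?_)
  field_simp

lemma hasDerivAt_ufun (n : ℕ) {θ : ℝ} (hθ : θ ∈ Set.Ioo 0 π) :
    HasDerivAt (ufun n) (u1fun n θ) θ := by
  have h := (hasDerivAt_sqrtsin hθ).mul (hasDerivAt_gfun n θ)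
  exact h

lemma hasDerivAt_u1fun (n : ℕ) {θ : ℝ} (hθ : θ ∈ Set.Ioo 0 π) :
    HasDerivAt (u1fun n)
      (-((((n:ℝ)+1/2)^2 + 1/(4 * Real.sin θ^2)) * ufun n θ)) θ := by
  have hs : 0 < Real.sin θ := Real.sin_pos_of_pos_of_lt_pi hθ.1 hθ.2
  have hr : 0 < Real.sqrt (Real.sin θ) := Real.sqrt_pos.mpr hs
  have hr2 : Real.sqrt (Real.sin θ) ^ 2 = Real.sin θ := Real.sq_sqrt hs.le
  -- derivative of quotient cos θ / (2 √(sin θ))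
  have hden : HasDerivAt (fun t => 2 * Real.sqrt (Real.sin t))
      (2 * (Real.cos θ / (2 * Real.sqrt (Real.sin θ)))) θ :=
    (hasDerivAt_sqrtsin hθ).const_mul 2
  have hq : HasDerivAt (fun t => Real.cos t / (2 * Real.sqrt (Real.sin t)))
      ((-Real.sin θ * (2 * Real.sqrt (Real.sin θ)) -
        Real.cos θ * (2 * (Real.cos θ / (2 * Real.sqrt (Real.sin θ))))) /
        (2 * Real.sqrt (Real.sin θ))^2) θ :=
    (Real.hasDerivAt_cos θ).div hden (by positivity)
  have h := (hq.mul (hasDerivAt_gfun n θ)).add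
    ((hasDerivAt_sqrtsin hθ).mul (hasDerivAt_g1fun n θ))
  refine h.congr_deriv (Eq.symm ?_)
  simp only [ufun, u1fun, g2fun, g1fun, gfun, Function.comp]
  set r := Real.sqrt (Real.sin θ) with hrdef
  have hco : Real.cos θ ^ 2 = 1 - r ^ 4 := by
    have hp := Real.sin_sq_add_cos_sq θ
    nlinarith [hr2]
  rw [show Real.sin θ = r ^ 2 from hr2.symm]
  have hrne : r ≠ 0 := ne_of_gt hr
  field_simp
  ring_nf
  linear_combination (4 * Polynomial.eval (Real.cos θ) (legPoly n)) * hco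

/-- Sturm-type oscillation: positive solution case leads to contradiction. -/
lemma sturm_pos {u u' q : ℝ → ℝ} {m a : ℝ} (hm : 0 < m)
    (hu : ∀ θ ∈ Set.Icc a (a + π/m), HasDerivAt u (u' θ) θ)
    (hu' : ∀ θ ∈ Set.Icc a (a + π/m), HasDerivAt u' (-(q θ * u θ)) θ)
    (hq : ∀ θ ∈ Set.Icc a (a + π/m), m^2 ≤ q θ)
    (hpos : ∀ θ ∈ Set.Icc a (a + π/m), 0 < u θ) : False := by
  set b := a + π/m with hbdef
  have hab : a ≤ b := by
    have : 0 < π/m := div_pos Real.pi_pos hm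
    simp [hbdef]; linarith
  set W : ℝ → ℝ := fun θ => u θ * (m * Real.cos (m*(θ-a))) - u' θ * Real.sin (m*(θ-a)) with hWdef
  have hW : ∀ θ ∈ Set.Icc a b, HasDerivAt W ((q θ - m^2) * u θ * Real.sin (m*(θ-a))) θ := by
    intro θ hθ
    have haff : HasDerivAt (fun t : ℝ => m*(t-a)) m θ := by
      simpa using ((hasDerivAt_id θ).sub_const a).const_mul m
    have hsin : HasDerivAt (fun t => Real.sin (m*(t-a))) (Real.cos (m*(θ-a)) * m) θ :=
      haff.sin
    have hcos : HasDerivAt (fun t => Real.cos (m*(t-a))) (-Real.sin (m*(θ-a)) * m) θ :=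
      haff.cos
    have h := ((hu θ hθ).mul (hcos.const_mul m)).sub ((hu' θ hθ).mul hsin)
    refine h.congr_deriv (Eq.symm ?_)
    ring
  have hWc : ContinuousOn W (Set.Icc a b) := fun θ hθ =>
    ((hW θ hθ).continuousAt).continuousWithinAt
  have hWmono : MonotoneOn W (Set.Icc a b) := by
    apply monotoneOn_of_deriv_nonneg (convex_Icc a b) hWc
    · intro θ hθ
      rw [interior_Icc] at hθ
      exact ((hW θ (Set.mem_Icc_of_Ioo hθ)).differentiableAt).differentiableWithinAt
    · intro θ hθ
      rw [interior_Icc] at hθ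
      rw [(hW θ (Set.mem_Icc_of_Ioo hθ)).deriv]
      have h1 : 0 < m*(θ-a) := by
        have := hθ.1; nlinarith
      have h2 : m*(θ-a) < π := by
        have := hθ.2
        have : m * (θ - a) < m * (b - a) := by nlinarith
        calc m*(θ-a) < m*(b-a) := this
        _ = π := by rw [hbdef]; field_simp; ring
      have hsinpos : 0 < Real.sin (m*(θ-a)) := Real.sin_pos_of_pos_of_lt_pi h1 h2
      have hq' := hq θ (Set.mem_Icc_of_Ioo hθ)
      have hp' := hpos θ (Set.mem_Icc_of_Ioo hθ)
      exact mul_nonneg (mul_nonneg (by linarith) hp'.le) hsinpos.le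
  have hWa : W a = m * u a := by simp [hWdef, mul_comm]
  have hWb : W b = -(m * u b) := by
    have hmb : m * (b - a) = π := by rw [hbdef]; field_simp; ring
    simp [hWdef, hmb]
    ring
  have h1 := hWmono (Set.left_mem_Icc.mpr hab) (Set.right_mem_Icc.mpr hab) hab
  have hua := hpos a (Set.left_mem_Icc.mpr hab)
  have hub := hpos b (Set.right_mem_Icc.mpr hab)
  rw [hWa, hWb] at h1
  nlinarith

/-- Sturm oscillation: a solution of `u'' + q u = 0` with `q ≥ m²` has a zero in any
closed interval of length `π/m`. -/
lemma sturm {u u' q : ℝ → ℝ} {m a : ℝ} (hm : 0 < m)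
    (hu : ∀ θ ∈ Set.Icc a (a + π/m), HasDerivAt u (u' θ) θ)
    (hu' : ∀ θ ∈ Set.Icc a (a + π/m), HasDerivAt u' (-(q θ * u θ)) θ)
    (hq : ∀ θ ∈ Set.Icc a (a + π/m), m^2 ≤ q θ) :
    ∃ θ ∈ Set.Icc a (a + π/m), u θ = 0 := by
  by_contra hcon
  push_neg at hcon
  set b := a + π/m with hbdef
  have hab : a ≤ b := by
    have : 0 < π/m := div_pos Real.pi_pos hm
    simp [hbdef]; linarith
  have huc : ContinuousOn u (Set.Icc a b) := fun θ hθ =>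
    ((hu θ hθ).continuousAt).continuousWithinAt
  -- sign is constant
  have hsign : (∀ θ ∈ Set.Icc a b, 0 < u θ) ∨ (∀ θ ∈ Set.Icc a b, u θ < 0) := by
    rcases lt_or_gt_of_ne (hcon a (Set.left_mem_Icc.mpr hab)) with hneg | hpos
    · right
      intro θ hθ
      by_contra hge
      push_neg at hge
      have hgt : 0 < u θ := lt_of_le_of_ne hge (Ne.symm (hcon θ hθ))
      have : (0:ℝ) ∈ Set.Icc (u a) (u θ) := ⟨le_of_lt hneg, le_of_lt hgt⟩
      have hsub : Set.Icc a θ ⊆ Set.Icc a b := Set.Icc_subset_Icc le_rfl hθ.2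
      obtain ⟨t, ht, hut⟩ := intermediate_value_Icc hθ.1 (huc.mono hsub) this
      exact hcon t (hsub ht) hut
    · left
      intro θ hθ
      by_contra hge
      push_neg at hge
      have hlt : u θ < 0 := lt_of_le_of_ne hge (hcon θ hθ)
      have : (0:ℝ) ∈ Set.Icc (u θ) (u a) := ⟨le_of_lt hlt, le_of_lt hpos⟩
      have hsub : Set.Icc a θ ⊆ Set.Icc a b := Set.Icc_subset_Icc le_rfl hθ.2
      obtain ⟨t, ht, hut⟩ := intermediate_value_Icc' hθ.1 (huc.mono hsub) this
      exact hcon t (hsub ht) hut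
  rcases hsign with hpos | hneg
  · exact sturm_pos hm hu hu' hq hpos
  · refine sturm_pos (u := fun θ => -u θ) (u' := fun θ => -u' θ) (q := q) hm
      (fun θ hθ => (hu θ hθ).neg) (fun θ hθ => ?_) hq
      (fun θ hθ => by simpa using hneg θ hθ)
    exact (hu' θ hθ).neg.congr_deriv (by ring)

/-- Any closed interval of length `π/(n+1/2)` inside `(0,π)` contains a point where
`P_n(cos θ) = 0`. -/
lemma exists_root_cos (n : ℕ) {a : ℝ} (ha : 0 < a) (hb : a + π/((n:ℝ)+1/2) < π) :
    ∃ θ ∈ Set.Icc a (a + π/((n:ℝ)+1/2)), (legPoly n).eval (Real.cos θ) = 0 := by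
  set m : ℝ := (n:ℝ)+1/2 with hmdef
  have hm : 0 < m := by positivity
  have hsub : Set.Icc a (a + π/m) ⊆ Set.Ioo 0 π := by
    intro θ hθ
    exact ⟨lt_of_lt_of_le ha hθ.1, lt_of_le_of_lt hθ.2 hb⟩
  have key := sturm (u := ufun n) (u' := u1fun n)
    (q := fun θ => ((n:ℝ)+1/2)^2 + 1/(4 * Real.sin θ^2)) hm
    (fun θ hθ => hasDerivAt_ufun n (hsub hθ))
    (fun θ hθ => by simpa using hasDerivAt_u1fun n (hsub hθ))
    (fun θ hθ => by
      have hsp : 0 < Real.sin θ := Real.sin_pos_of_pos_of_lt_pi (hsub hθ).1 (hsub hθ).2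
      have : 0 ≤ 1/(4 * Real.sin θ^2) := by positivity
      rw [hmdef]; linarith)
  obtain ⟨θ, hθ, hzero⟩ := key
  refine ⟨θ, hθ, ?_⟩
  have hsp : 0 < Real.sin θ := Real.sin_pos_of_pos_of_lt_pi (hsub hθ).1 (hsub hθ).2
  have hrp : 0 < Real.sqrt (Real.sin θ) := Real.sqrt_pos.mpr hsp
  have : Real.sqrt (Real.sin θ) * gfun n θ = 0 := hzero
  have := mul_eq_zero.mp this
  rcases this with h | h
  · exact absurd h hrp.ne'
  · exact h

lemma root_location (x : ℕ → ℕ → ℝ) (hx : IsLegendreRootSystem x) (c : ℕ) (hc : 1 ≤ c)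
    (k : ℕ) (hk1 : 1 ≤ k) (hkc : k ≤ c) :
    ∃ θ : ℝ, x k c = Real.cos θ ∧ |θ - ((c:ℝ) - k) * π / c| ≤ 2 * π / c := by
  obtain ⟨hroot, hmono, hall⟩ := hx c hc
  have hcR : (1:ℝ) ≤ c := by exact_mod_cast hc
  have hcpos : (0:ℝ) < c := by linarith
  set m : ℝ := (c:ℝ) + 1/2 with hmdef
  have hm : (0:ℝ) < m := by positivity
  set δ : ℝ := π / (8 * (c:ℝ)^2) with hδdef
  have hδpos : 0 < δ := by positivity
  set L : ℕ → ℝ := fun j => ((j:ℝ)-1)*π/m + j*δ with hLdef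
  -- each interval [L j, L j + π/m] contains a root
  have H : ∀ j : ℕ, ∃ θ : ℝ, ∃ kk : ℕ, 1 ≤ j → j ≤ c →
      (L j ≤ θ ∧ θ ≤ L j + π/m ∧ 1 ≤ kk ∧ kk ≤ c ∧ x kk c = Real.cos θ ∧
        0 < θ ∧ θ < π) := by
    intro j
    by_cases hj : 1 ≤ j ∧ j ≤ c
    · obtain ⟨hj1, hjc⟩ := hj
      have hjR : (1:ℝ) ≤ j := by exact_mod_cast hj1
      have hjcR : (j:ℝ) ≤ c := by exact_mod_cast hjc
      have hLpos : 0 < L j := by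
        have h1 : 0 ≤ ((j:ℝ)-1)*π/m := by
          apply div_nonneg _ hm.le
          have : 0 ≤ (j:ℝ)-1 := by linarith
          positivity
        have h2 : 0 < (j:ℝ)*δ := by positivity
        simp only [hLdef]; linarith
      have hRlt : L j + π/m < π := by
        -- L j + π/m = jπ/m + jδ ≤ cπ/m + cδ < π
        have h1 : L j + π/m = (j:ℝ)*π/m + j*δ := by
          simp only [hLdef]; field_simp; ring
        have h2 : (j:ℝ)*π/m ≤ (c:ℝ)*π/m := by
          gcongr
        have h3 : (j:ℝ)*δ ≤ (c:ℝ)*δ := by gcongr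
        have h4 : (c:ℝ)*π/m + (c:ℝ)*δ < π := by
          rw [hmdef, hδdef, ← sub_pos]
          field_simp
          nlinarith [mul_pos (mul_pos Real.pi_pos hcpos) (show (0:ℝ) < 6*(c:ℝ)-1 by linarith)]
        linarith
      have := exists_root_cos c hLpos hRlt
      obtain ⟨θ, hθmem, hθzero⟩ := this
      have hθ0 : 0 < θ := lt_of_lt_of_le hLpos hθmem.1
      have hθπ : θ < π := lt_of_le_of_lt hθmem.2 hRlt
      have hcos1 : Real.cos θ < 1 := by
        have h0m : (0:ℝ) ∈ Set.Icc 0 π := Set.left_mem_Icc.mpr Real.pi_pos.le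
        have hθm : θ ∈ Set.Icc 0 π := ⟨hθ0.le, hθπ.le⟩
        have := Real.strictAntiOn_cos h0m hθm hθ0
        simpa using this
      have hcosm1 : -1 < Real.cos θ := by
        have hπm : π ∈ Set.Icc 0 π := Set.right_mem_Icc.mpr Real.pi_pos.le
        have hθm : θ ∈ Set.Icc 0 π := ⟨hθ0.le, hθπ.le⟩
        have := Real.strictAntiOn_cos hθm hπm hθπ
        simpa using this
      have hleg : legendreP c (Real.cos θ) = 0 := by
        rw [legendreP_eq_eval]; exact hθzero
      obtain ⟨kk, hkk1, hkkc, hkkval⟩ := hall (Real.cos θ) ⟨hcosm1, hcos1⟩ hleg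
      exact ⟨θ, kk, fun _ _ => ⟨hθmem.1, hθmem.2, hkk1, hkkc, hkkval, hθ0, hθπ⟩⟩
    · exact ⟨0, 0, fun h1 h2 => absurd ⟨h1, h2⟩ hj⟩
  choose θf kf hf using H
  -- k ↦ kf is strictly antitone
  have hanti : ∀ j j' : ℕ, 1 ≤ j → j < j' → j' ≤ c → kf j' < kf j := by
    intro j j' hj1 hjj' hj'c
    have hj'1 : 1 ≤ j' := le_trans hj1 hjj'.le
    have hjc : j ≤ c := le_trans hjj'.le hj'c
    obtain ⟨hL1, hR1, hk1', hkc1, hval1, hpos1, hlt1⟩ := hf j hj1 hjc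
    obtain ⟨hL2, hR2, hk2', hkc2, hval2, hpos2, hlt2⟩ := hf j' hj'1 hj'c
    have hθlt : θf j < θf j' := by
      have hjj'R : (j:ℝ) + 1 ≤ j' := by exact_mod_cast hjj'
      have hstep : L j + π/m < L j' := by
        simp only [hLdef]
        have e1 : ((j:ℝ)-1)*π/m + π/m = (j:ℝ)*π/m := by field_simp; ring
        have h2 : (j:ℝ)*π/m ≤ ((j':ℝ)-1)*π/m := by
          have hle : (j:ℝ) ≤ (j':ℝ)-1 := by linarith
          exact (div_le_div_iff_of_pos_right hm).mpr (mul_le_mul_of_nonneg_right hle Real.pi_pos.le)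
        have h3 : (j:ℝ)*δ < (j':ℝ)*δ := by
          have : (j:ℝ) < j' := by linarith
          exact mul_lt_mul_of_pos_right this hδpos
        linarith
      exact lt_of_le_of_lt hR1 (lt_of_lt_of_le hstep hL2)
    have hcoslt : Real.cos (θf j') < Real.cos (θf j) :=
      Real.strictAntiOn_cos ⟨hpos1.le, hlt1.le⟩ ⟨hpos2.le, hlt2.le⟩ hθlt
    rw [← hval1, ← hval2] at hcoslt
    by_contra hcon
    push_neg at hcon
    rcases lt_or_eq_of_le hcon with hlt | heq
    · exact absurd (hmono _ _ hk1' hlt hkc2) (by linarith)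
    · rw [heq] at hcoslt; linarith
  -- stepping lemma
  have hstep : ∀ d j : ℕ, 1 ≤ j → j + d ≤ c → kf (j+d) + d ≤ kf j := by
    intro d
    induction d with
    | zero => intro j _ _; simp
    | succ d ih =>
      intro j hj1 hjd
      have h1 : kf (j+d+1) < kf (j+d) := hanti (j+d) (j+d+1) (by omega) (by omega) (by omega)
      have h2 : kf (j+d) + d ≤ kf j := ih j hj1 (by omega)
      have hrw : kf (j + (d+1)) = kf (j+d+1) := rfl
      omega
  -- identify kf (c+1-k) = k
  set j : ℕ := c + 1 - k with hjdef
  have hj1 : 1 ≤ j := by omega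
  have hjc : j ≤ c := by omega
  obtain ⟨hL1, hR1, hkf1, hkfc, hval, hpos, hlt⟩ := hf j hj1 hjc
  have hkfeq : kf j = k := by
    have low : kf c + (c - j) ≤ kf j := by
      have := hstep (c - j) j hj1 (by omega)
      simpa [Nat.add_sub_cancel' hjc] using this
    have h1c : kf c ≥ 1 := (hf c (by omega) le_rfl).2.2.1
    have upp : kf j + (j - 1) ≤ kf 1 := by
      have := hstep (j - 1) 1 le_rfl (by omega)
      simpa [Nat.add_sub_cancel' hj1] using this
    have hkf1c : kf 1 ≤ c := (hf 1 (by omega) (by omega)).2.2.2.1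
    omega
  refine ⟨θf j, by rw [← hkfeq]; exact hval, ?_⟩
  -- numeric estimate
  have hjR : ((j:ℝ)) = (c:ℝ) + 1 - k := by
    rw [hjdef]
    push_cast [Nat.cast_sub (show k ≤ c+1 by omega)]
    ring
  have hjcR : (j:ℝ) ≤ c := by exact_mod_cast hjc
  have hj1R : (1:ℝ) ≤ j := by exact_mod_cast hj1
  have hck : (c:ℝ) - k = (j:ℝ) - 1 := by rw [hjR]; ring
  simp only [hLdef] at hL1 hR1
  have hjm : ((j:ℝ)-1) ≤ m := by rw [hmdef]; linarith
  have e1 : ((j:ℝ)-1)*π/c - ((j:ℝ)-1)*π/m = (((j:ℝ)-1)/m) * (π/(2*c)) := by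
    rw [hmdef]; field_simp; ring
  have hfrac : ((j:ℝ)-1)/m ≤ 1 := (div_le_one hm).mpr hjm
  have hfge : (0:ℝ) ≤ ((j:ℝ)-1)/m := div_nonneg (by linarith) hm.le
  have hb1 : ((j:ℝ)-1)*π/c - ((j:ℝ)-1)*π/m ≤ π/(2*c) := by
    rw [e1]
    calc (((j:ℝ)-1)/m) * (π/(2*c)) ≤ 1 * (π/(2*c)) :=
          mul_le_mul_of_nonneg_right hfrac (by positivity)
    _ = π/(2*c) := one_mul _
  have hb2 : (j:ℝ)*π/m ≤ (j:ℝ)*π/c := by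
    apply div_le_div_of_nonneg_left (by positivity) hcpos
    rw [hmdef]; linarith
  have hδc : (c:ℝ)*δ = π/(8*c) := by rw [hδdef]; field_simp
  have hjδ : (j:ℝ)*δ ≤ (c:ℝ)*δ := mul_le_mul_of_nonneg_right hjcR hδpos.le
  have hjδ0 : 0 ≤ (j:ℝ)*δ := by positivity
  have e2 : ((j:ℝ)-1)*π/m + π/m = (j:ℝ)*π/m := by field_simp; ring
  have e3 : (j:ℝ)*π/c - ((j:ℝ)-1)*π/c = π/c := by ring
  have ha1 : π/(2*(c:ℝ)) = (π/c)/2 := by ring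
  have ha2 : π/(8*(c:ℝ)) = (π/c)/8 := by ring
  have ha3 : 2*π/(c:ℝ) = 2*(π/c) := by ring
  have hpc : 0 ≤ π/(c:ℝ) := by positivity
  rw [hck, abs_le]
  constructor
  · linarith
  · linarith

lemma cos_lip (a b : ℝ) : |Real.cos a - Real.cos b| ≤ |a - b| := by
  rw [Real.cos_sub_cos]
  rw [abs_mul, abs_mul]
  have h1 : |Real.sin ((a+b)/2)| ≤ 1 := Real.abs_sin_le_one _
  have h2 : |Real.sin ((a-b)/2)| ≤ |(a-b)/2| := Real.abs_sin_le_abs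
  have h3 : |(-2 : ℝ)| = 2 := by norm_num
  calc |(-2:ℝ)| * |Real.sin ((a+b)/2)| * |Real.sin ((a-b)/2)|
      ≤ |(-2:ℝ)| * 1 * |(a-b)/2| := by
        apply mul_le_mul _ h2 (abs_nonneg _) (by positivity)
        exact mul_le_mul_of_nonneg_left h1 (abs_nonneg _)
    _ = |a - b| := by rw [h3, abs_div]; simp [abs_of_pos]; ring

end LegendrePolynomialFacts

/-- `p_{k,c} = (x_{k,c}+1)/2 = sin²(πk/(2c)) + o(1)` as `c → ∞`, uniformly over `k`
with `αc < k < (1−α)c`. -/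
theorem p_asymptotics (x : ℕ → ℕ → ℝ) (hx : IsLegendreRootSystem x)
    (α : ℝ) (hα0 : 0 < α) (hα1 : α < 1 / 2) (ε : ℝ) (hε : 0 < ε) :
    ∃ C : ℕ, ∀ c : ℕ, C ≤ c → ∀ k : ℕ,
      α * (c : ℝ) < (k : ℝ) → (k : ℝ) < (1 - α) * (c : ℝ) →
      |(x k c + 1) / 2 - Real.sin (π * (k : ℝ) / (2 * (c : ℝ))) ^ 2| < ε := by
  refine ⟨⌈π/ε⌉₊ + 1, fun c hc k hk1 hk2 => ?_⟩
  have hc1 : 1 ≤ c := by omega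
  have hcR : (1:ℝ) ≤ c := by exact_mod_cast hc1
  have hcpos : (0:ℝ) < c := by linarith
  have hk1' : 1 ≤ k := by
    by_contra h
    push_neg at h
    have hk0 : k = 0 := by omega
    subst hk0
    have : (0:ℝ) < α * c := by positivity
    simp at hk1
    linarith
  have hkc : k ≤ c := by
    have hklt : (k:ℝ) < c := by nlinarith
    exact (Nat.cast_lt.mp hklt).le
  obtain ⟨θ, hxe, hθ⟩ := root_location x hx c hc1 k hk1' hkc
  rw [hxe]
  set T : ℝ := ((c:ℝ) - k)*π/c with hTdef
  have h1 : (Real.cos θ + 1)/2 = Real.cos (θ/2)^2 := by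
    rw [Real.cos_sq, show 2*(θ/2) = θ by ring]
    ring
  have h2 : Real.sin (π*(k:ℝ)/(2*(c:ℝ))) ^2 = Real.cos (T/2)^2 := by
    rw [show T/2 = π/2 - π*(k:ℝ)/(2*(c:ℝ)) by rw [hTdef]; field_simp,
      Real.cos_pi_div_two_sub]
  rw [h1, h2]
  have h3 : Real.cos (θ/2)^2 - Real.cos (T/2)^2 = (Real.cos θ - Real.cos T)/2 := by
    rw [Real.cos_sq, Real.cos_sq, show 2*(θ/2) = θ by ring, show 2*(T/2) = T by ring]
    ring
  rw [h3, abs_div, abs_of_pos (show (0:ℝ) < 2 by norm_num)]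
  have h4 : |Real.cos θ - Real.cos T| ≤ |θ - T| := cos_lip θ T
  have h5 : π/(c:ℝ) < ε := by
    rw [div_lt_iff₀ hcpos]
    have hceil : π/ε ≤ (⌈π/ε⌉₊ : ℝ) := Nat.le_ceil _
    have hcge : ((⌈π/ε⌉₊ : ℕ):ℝ) + 1 ≤ c := by
      have : ((⌈π/ε⌉₊ + 1 : ℕ):ℝ) ≤ c := by exact_mod_cast hc
      push_cast at this
      linarith
    have : π/ε < c := by linarith
    calc π = (π/ε) * ε := by field_simp
    _ < c * ε := by exact mul_lt_mul_of_pos_right this hε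
    _ = ε * c := by ring
  have h6 : |θ - T| ≤ 2*π/c := hθ
  calc |Real.cos θ - Real.cos T| / 2 ≤ |θ - T| / 2 := by linarith
  _ ≤ (2*π/(c:ℝ))/2 := by linarith
  _ = π/c := by ring
  _ < ε := h5
end

section
/- For every integer c ≥ 1, the sum N_c = Σ_{k=1}^{c} w_{k,c} satisfies N_c < π. -/
open Real

open Real Polynomial Finset

namespace LegAux

/-- iterated derivatives of `(X²-1)^c` -/
noncomputable def B (c n : ℕ) : Polynomial ℝ :=
  derivative^[n] ((X ^ 2 - 1) ^ c)

lemma B_succ (c n : ℕ) : B c (n + 1) = derivative (B c n) := by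
  simp [B, Function.iterate_succ_apply']

lemma iteratedDeriv_polyeval (n : ℕ) (p : Polynomial ℝ) :
    iteratedDeriv n (fun s : ℝ => p.eval s) = fun t => (derivative^[n] p).eval t := by
  induction n generalizing p with
  | zero => simp
  | succ n ih =>
    rw [iteratedDeriv_succ']
    have : (deriv fun s : ℝ => p.eval s) = fun s => (derivative p).eval s := by
      funext s; exact Polynomial.deriv (p := p)
    rw [this, ih, Function.iterate_succ_apply]

/-- the normalization constant -/
noncomputable def K (c : ℕ) : ℝ := 1 / (2 ^ c * (Nat.factorial c : ℝ))

lemma K_pos (c : ℕ) : 0 < K c := by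
  have h1 : (0:ℝ) < 2 ^ c := by positivity
  have h2 : (0:ℝ) < (Nat.factorial c : ℝ) := by
    exact_mod_cast Nat.factorial_pos c
  unfold K; positivity

lemma legendreP_eq (c : ℕ) (t : ℝ) :
    legendreP c t = K c * (B c c).eval t := by
  have h : (fun s : ℝ => (s ^ 2 - 1) ^ c)
      = fun s : ℝ => (((X:Polynomial ℝ) ^ 2 - 1) ^ c).eval s := by
    funext s; simp
  rw [legendreP, h, iteratedDeriv_polyeval]
  rfl

/-- first derivative function -/
noncomputable def P1 (c : ℕ) (t : ℝ) : ℝ := K c * (B c (c+1)).eval t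

/-- second derivative function -/
noncomputable def P2 (c : ℕ) (t : ℝ) : ℝ := K c * (B c (c+2)).eval t

lemma hasDerivAt_legendreP (c : ℕ) (t : ℝ) :
    HasDerivAt (legendreP c) (P1 c t) t := by
  have h : (legendreP c) = fun t => K c * (B c c).eval t := by
    funext t; exact legendreP_eq c t
  rw [h]
  have := ((B c c).hasDerivAt t).const_mul (K c)
  simpa [P1, ← B_succ] using this

lemma hasDerivAt_P1 (c : ℕ) (t : ℝ) :
    HasDerivAt (P1 c) (P2 c t) t := by
  have := ((B c (c+1)).hasDerivAt t).const_mul (K c)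
  rw [← B_succ] at this
  exact this

lemma deriv_legendreP (c : ℕ) (t : ℝ) :
    deriv (legendreP c) t = P1 c t := (hasDerivAt_legendreP c t).deriv

end LegAux
namespace LegAux
open Polynomial Finset

lemma L0 (c : ℕ) (hc : 1 ≤ c) :
    ((X:Polynomial ℝ) ^ 2 - 1) * B c 1 = C (2 * (c:ℝ)) * (X * B c 0) := by
  obtain ⟨k, rfl⟩ := Nat.exists_eq_add_of_le hc
  have hB1 : B (1+k) 1 = derivative (((X:Polynomial ℝ)^2-1)^(1+k)) := by
    simp [B]
  have hB0 : B (1+k) 0 = ((X:Polynomial ℝ)^2-1)^(1+k) := by simp [B]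
  rw [hB1, hB0, derivative_pow]
  have h2 : derivative ((X:Polynomial ℝ)^2 - 1) = C 2 * X := by
    simp [derivative_X_pow]
    rw [← C_1, ← C_add]; norm_num
  rw [h2]
  have h3 : (1 + k) - 1 = k := by omega
  rw [h3]
  have h4 : ((X:Polynomial ℝ)^2-1)^(1+k) = ((X:Polynomial ℝ)^2-1) * ((X:Polynomial ℝ)^2-1)^k := by
    rw [pow_add, pow_one]
  rw [h4]
  simp only [map_mul, map_add, map_ofNat, map_natCast, map_one, Nat.cast_add, Nat.cast_one]
  ring

lemma Sid (c : ℕ) (hc : 1 ≤ c) : ∀ n : ℕ,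
    ((X:Polynomial ℝ) ^ 2 - 1) * B c (n+2)
      = C (2*(c:ℝ) - 2*(n:ℝ) - 2) * (X * B c (n+1))
        + C (((n:ℝ)+1) * (2*(c:ℝ) - (n:ℝ))) * B c n := by
  intro n
  induction n with
  | zero =>
    have h := congrArg derivative (L0 c hc)
    simp only [derivative_mul, derivative_add, derivative_sub, derivative_one,
      derivative_X_pow, derivative_C, derivative_X, derivative_natCast, derivative_ofNat,
      ← B_succ, Nat.cast_ofNat, map_mul,
      map_ofNat, map_natCast, map_sub, map_add, map_one, Nat.cast_add, Nat.cast_one,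
      Nat.cast_zero, map_zero] at h ⊢
    push_cast at h ⊢
    linear_combination h
  | succ n ih =>
    have h := congrArg derivative ih
    simp only [derivative_mul, derivative_add, derivative_sub, derivative_one,
      derivative_X_pow, derivative_C, derivative_X, derivative_natCast, derivative_ofNat,
      ← B_succ, Nat.cast_ofNat, map_mul,
      map_ofNat, map_natCast, map_sub, map_add, map_one, Nat.cast_add, Nat.cast_one,
      Nat.cast_zero, map_zero] at h ⊢
    push_cast at h ⊢
    linear_combination h

/-- evaluation at 0 -/
noncomputable def a (c n : ℕ) : ℝ := (B c n).eval 0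

lemma a_zero (c : ℕ) : a c 0 = (-1:ℝ)^c := by
  simp [a, B]

lemma a_one (c : ℕ) (hc : 1 ≤ c) : a c 1 = 0 := by
  have h := congrArg (Polynomial.eval (0:ℝ)) (L0 c hc)
  simp [a] at h ⊢
  simpa [a] using h

lemma a_rec (c : ℕ) (hc : 1 ≤ c) (n : ℕ) :
    a c (n+2) = -(((n:ℝ)+1) * (2*(c:ℝ) - (n:ℝ))) * a c n := by
  have h := congrArg (Polynomial.eval (0:ℝ)) (Sid c hc n)
  simp only [eval_mul, eval_sub, eval_add, eval_pow, eval_X, eval_one, eval_C, a] at h ⊢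
  have h2 : (0:ℝ)^2 - 1 = -1 := by norm_num
  rw [h2] at h
  linarith [h]

lemma a_odd (c : ℕ) (hc : 1 ≤ c) : ∀ j : ℕ, a c (2*j+1) = 0 := by
  intro j
  induction j with
  | zero => simpa using a_one c hc
  | succ j ih =>
    have h : 2*(j+1)+1 = (2*j+1)+2 := by ring
    rw [h, a_rec c hc (2*j+1), ih, mul_zero]

lemma a_even (c : ℕ) (hc : 1 ≤ c) : ∀ j : ℕ,
    a c (2*j) = (-1:ℝ)^c * (-1:ℝ)^j *
      ∏ i ∈ range j, ((2*(i:ℝ)+1) * (2*(c:ℝ) - 2*(i:ℝ))) := by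
  intro j
  induction j with
  | zero => simpa using a_zero c
  | succ j ih =>
    have h : 2*(j+1) = (2*j)+2 := by ring
    rw [h, a_rec c hc (2*j), ih, prod_range_succ]
    push_cast
    ring

end LegAux
namespace LegAux
open Polynomial Finset

/-- Wallis ratio -/
noncomputable def bseq (m : ℕ) : ℝ := ∏ i ∈ range m, (2*(i:ℝ)+1)/(2*(i:ℝ)+2)

noncomputable def dseq (m : ℕ) : ℝ := ∏ i ∈ range m, (2*(i:ℝ)+2)/(2*(i:ℝ)+3)

lemma bseq_pos (m : ℕ) : 0 < bseq m := by
  apply Finset.prod_pos; intro i _; positivity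

lemma dseq_pos (m : ℕ) : 0 < dseq m := by
  apply Finset.prod_pos; intro i _; positivity

lemma bd (m : ℕ) : bseq m * dseq m * (2*(m:ℝ)+1) = 1 := by
  induction m with
  | zero => simp [bseq, dseq]
  | succ m ih =>
    have hb : bseq (m+1) = bseq m * ((2*(m:ℝ)+1)/(2*(m:ℝ)+2)) := prod_range_succ _ _
    have hd : dseq (m+1) = dseq m * ((2*(m:ℝ)+2)/(2*(m:ℝ)+3)) := prod_range_succ _ _
    rw [hb, hd]
    have h1 : (2*(m:ℝ)+2) ≠ 0 := by positivity
    have h2 : (2*(m:ℝ)+3) ≠ 0 := by positivity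
    have key : bseq m * ((2*(m:ℝ)+1)/(2*(m:ℝ)+2)) * (dseq m * ((2*(m:ℝ)+2)/(2*(m:ℝ)+3)))
        * (2*((m:ℕ)+1:ℝ)+1) = bseq m * dseq m * (2*(m:ℝ)+1) := by
      field_simp
      ring
    push_cast
    push_cast at key
    rw [key, ih]

lemma sin_int_strict (m : ℕ) :
    (∫ x in (0:ℝ)..π, Real.sin x ^ (2*m+1)) < ∫ x in (0:ℝ)..π, Real.sin x ^ (2*m) := by
  have hconte : Continuous fun x : ℝ => Real.sin x ^ (2*m) := by continuity
  have hconto : Continuous fun x : ℝ => Real.sin x ^ (2*m+1) := by continuity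
  have hcont : Continuous fun x : ℝ => Real.sin x ^ (2*m) - Real.sin x ^ (2*m+1) :=
    hconte.sub hconto
  have hint : ∀ u v : ℝ, IntervalIntegrable
      (fun x => Real.sin x ^ (2*m) - Real.sin x ^ (2*m+1)) MeasureTheory.volume u v :=
    fun u v => hcont.intervalIntegrable u v
  set f := fun x : ℝ => Real.sin x ^ (2*m) - Real.sin x ^ (2*m+1) with hf
  have hfnn : ∀ x : ℝ, 0 ≤ x → x ≤ π → 0 ≤ f x := by
    intro x hx0 hxpi
    have hs0 : 0 ≤ Real.sin x := Real.sin_nonneg_of_nonneg_of_le_pi hx0 hxpi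
    have hs1 : Real.sin x ≤ 1 := Real.sin_le_one x
    have hp : 0 ≤ Real.sin x ^ (2*m) := by positivity
    have : f x = Real.sin x ^ (2*m) * (1 - Real.sin x) := by
      simp only [hf]; ring
    rw [this]
    exact mul_nonneg hp (by linarith)
  have hpi : (0:ℝ) < π := Real.pi_pos
  have h1 : (0:ℝ) ≤ π/6 := by positivity
  have h2 : (π/6 : ℝ) < π/4 := by linarith
  have h3 : (π/4 : ℝ) ≤ π := by linarith
  have hposmid : 0 < ∫ x in (π/6:ℝ)..(π/4), f x := by
    apply intervalIntegral.intervalIntegral_pos_of_pos_on (hint _ _) _ h2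
    intro x hx
    obtain ⟨hxa, hxb⟩ := hx
    have hx0 : 0 < x := lt_of_lt_of_le (by positivity) (le_of_lt hxa)
    have hxpi : x < π := lt_of_lt_of_le hxb (by linarith)
    have hs0 : 0 < Real.sin x := Real.sin_pos_of_pos_of_lt_pi hx0 hxpi
    have hs1 : Real.sin x < 1 := by
      have hx2 : x < π/2 := by linarith
      calc Real.sin x < Real.sin (π/2) := by
            apply Real.sin_lt_sin_of_lt_of_le_pi_div_two (by linarith) le_rfl hx2
        _ = 1 := Real.sin_pi_div_two
    have : f x = Real.sin x ^ (2*m) * (1 - Real.sin x) := by simp only [hf]; ring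
    rw [this]
    have := pow_pos hs0 (2*m)
    nlinarith
  have hnn1 : 0 ≤ ∫ x in (0:ℝ)..(π/6), f x := by
    apply intervalIntegral.integral_nonneg h1
    intro u hu
    exact hfnn u hu.1 (le_trans hu.2 (by linarith))
  have hnn3 : 0 ≤ ∫ x in (π/4:ℝ)..π, f x := by
    apply intervalIntegral.integral_nonneg h3
    intro u hu
    exact hfnn u (le_trans (by positivity) hu.1) hu.2
  have hsplit1 : (∫ x in (0:ℝ)..(π/4), f x) + ∫ x in (π/4:ℝ)..π, f x
      = ∫ x in (0:ℝ)..π, f x :=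
    intervalIntegral.integral_add_adjacent_intervals (hint _ _) (hint _ _)
  have hsplit2 : (∫ x in (0:ℝ)..(π/6), f x) + ∫ x in (π/6:ℝ)..(π/4), f x
      = ∫ x in (0:ℝ)..(π/4), f x :=
    intervalIntegral.integral_add_adjacent_intervals (hint _ _) (hint _ _)
  have hftotal : 0 < ∫ x in (0:ℝ)..π, f x := by
    rw [← hsplit1, ← hsplit2]
    linarith
  have hsub : (∫ x in (0:ℝ)..π, f x)
      = (∫ x in (0:ℝ)..π, Real.sin x ^ (2*m)) - ∫ x in (0:ℝ)..π, Real.sin x ^ (2*m+1) := by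
    exact intervalIntegral.integral_sub (hconte.intervalIntegrable _ _)
      (hconto.intervalIntegrable _ _)
  rw [hsub] at hftotal
  linarith

end LegAux
namespace LegAux
open Polynomial Finset

lemma wallis (m : ℕ) : 2 < π * ((2*(m:ℝ)+1) * (bseq m)^2) := by
  have hie : (∫ x in (0:ℝ)..π, Real.sin x ^ (2*m)) = π * bseq m := by
    rw [integral_sin_pow_even]; rfl
  have hio : (∫ x in (0:ℝ)..π, Real.sin x ^ (2*m+1)) = 2 * dseq m := by
    rw [integral_sin_pow_odd]; rfl
  have h := sin_int_strict m
  rw [hie, hio] at h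
  -- 2 * dseq m < π * bseq m ; multiply by (2m+1) * bseq m > 0
  have hb := bseq_pos m
  have hd := dseq_pos m
  have hbd := bd m
  have hmul : 2 * dseq m * ((2*(m:ℝ)+1) * bseq m) < π * bseq m * ((2*(m:ℝ)+1) * bseq m) := by
    apply mul_lt_mul_of_pos_right h
    positivity
  calc (2:ℝ) = 2 * (bseq m * dseq m * (2*(m:ℝ)+1)) := by rw [hbd]; ring
    _ = 2 * dseq m * ((2*(m:ℝ)+1) * bseq m) := by ring
    _ < π * bseq m * ((2*(m:ℝ)+1) * bseq m) := hmul
    _ = π * ((2*(m:ℝ)+1) * (bseq m)^2) := by ring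

lemma prod_two_mul_cast (m : ℕ) :
    ∏ i ∈ range m, (2*(i:ℝ)+2) = 2^m * (Nat.factorial m : ℝ) := by
  have h : ∀ i ∈ range m, (2*(i:ℝ)+2) = 2 * ((i:ℝ)+1) := by intros; ring
  rw [prod_congr rfl h, prod_mul_distrib, prod_const, card_range]
  congr 1
  calc ∏ x ∈ range m, ((x:ℝ)+1) = ((∏ x ∈ range m, (x+1) : ℕ) : ℝ) := by push_cast; rfl
    _ = (Nat.factorial m : ℝ) := by rw [Finset.prod_range_add_one_eq_factorial]

lemma bseq_ratio (m : ℕ) :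
    bseq m = (∏ i ∈ range m, (2*(i:ℝ)+1)) / (2^m * (Nat.factorial m : ℝ)) := by
  rw [bseq, prod_div_distrib, prod_two_mul_cast]

lemma prod_desc (m l : ℕ) (hml : m ≤ l) :
    (∏ i ∈ range m, ((l:ℝ) - (i:ℝ))) * (Nat.factorial (l - m) : ℝ)
      = (Nat.factorial l : ℝ) := by
  have h1 : ∀ i ∈ range m, ((l:ℝ) - (i:ℝ)) = ((l - i : ℕ) : ℝ) := by
    intro i hi
    have : i ≤ l := le_trans (le_of_lt (mem_range.mp hi)) hml
    push_cast [Nat.cast_sub this]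
    ring
  rw [prod_congr rfl h1, ← Nat.cast_prod, ← Nat.cast_mul]
  norm_cast
  rw [← Nat.descFactorial_eq_prod_range, mul_comm]
  exact Nat.factorial_mul_descFactorial hml

lemma prod_split (c j : ℕ) :
    ∏ i ∈ range j, ((2*(i:ℝ)+1) * (2*(c:ℝ) - 2*(i:ℝ)))
      = (∏ i ∈ range j, (2*(i:ℝ)+1)) * (2^j * ∏ i ∈ range j, ((c:ℝ) - (i:ℝ))) := by
  have h2 : (2:ℝ)^j = ∏ _i ∈ range j, (2:ℝ) := by rw [prod_const, card_range]
  rw [h2, ← prod_mul_distrib, ← prod_mul_distrib]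
  apply prod_congr rfl
  intro i _
  ring

/-- the central combination K c * (prod appearing in a_even j) in closed form, for c ≥ j -/
lemma K_mul_prod (c j : ℕ) (hj : j ≤ c) (hcj : Nat.factorial (c - j) ≠ 0) :
    K c * ∏ i ∈ range j, ((2*(i:ℝ)+1) * (2*(c:ℝ) - 2*(i:ℝ)))
      = (∏ i ∈ range j, (2*(i:ℝ)+1)) * 2^j * (Nat.factorial c : ℝ)
          / ((Nat.factorial (c-j) : ℝ) * (2^c * (Nat.factorial c : ℝ))) := by
  rw [prod_split]
  have hD := prod_desc j c hj
  have hcf : (Nat.factorial (c-j) : ℝ) ≠ 0 := by exact_mod_cast hcj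
  rw [K]
  have hcfact : (Nat.factorial c : ℝ) ≠ 0 := by
    exact_mod_cast (Nat.factorial_pos c).ne'
  have h2c : (2:ℝ)^c ≠ 0 := by positivity
  field_simp
  rw [← hD]

lemma sq_legendreP_zero_even (m : ℕ) (hm : 1 ≤ m) :
    (legendreP (2*m) 0)^2 = (bseq m)^2 := by
  set c := 2*m with hcdef
  have hc : 1 ≤ c := by omega
  have hPval : legendreP c 0 = K c * a c c := by
    rw [legendreP_eq]; rfl
  have hcc : c = 2 * m := hcdef
  have hval : legendreP c 0 = (-1:ℝ)^c * (-1:ℝ)^m *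
      (K c * ∏ i ∈ range m, ((2*(i:ℝ)+1) * (2*(c:ℝ) - 2*(i:ℝ)))) := by
    rw [hPval]
    rw [show a c c = a c (2*m) from by rw [hcc]]
    rw [a_even c hc m]
    ring
  have hKp := K_mul_prod c m (by omega) (by positivity)
  have hcm : c - m = m := by omega
  rw [hcm] at hKp
  have h2c : (2:ℝ)^c = 2^m * 2^m := by
    rw [hcc, two_mul, pow_add]
  have hcfact : (Nat.factorial c : ℝ) ≠ 0 := by
    exact_mod_cast (Nat.factorial_pos c).ne'
  have hmfact : (Nat.factorial m : ℝ) ≠ 0 := by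
    exact_mod_cast (Nat.factorial_pos m).ne'
  have h2m : (2:ℝ)^m ≠ 0 := by positivity
  have hred : K c * ∏ i ∈ range m, ((2*(i:ℝ)+1) * (2*(c:ℝ) - 2*(i:ℝ))) = bseq m := by
    rw [hKp, bseq_ratio, h2c]
    field_simp
  rw [hval, hred]
  have hs1 : ((-1:ℝ)^c)^2 = 1 := by
    rw [← pow_mul, mul_comm c 2, pow_mul]; norm_num
  have hs2 : ((-1:ℝ)^m)^2 = 1 := by
    rw [← pow_mul, mul_comm m 2, pow_mul]; norm_num
  rw [mul_pow, mul_pow, hs1, hs2]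
  ring

lemma legendreP_zero_odd (m : ℕ) : legendreP (2*m+1) 0 = 0 := by
  have hc : 1 ≤ 2*m+1 := by omega
  rw [legendreP_eq]
  have : (B (2*m+1) (2*m+1)).eval 0 = a (2*m+1) (2*m+1) := rfl
  rw [this, a_odd (2*m+1) hc m, mul_zero]

lemma sq_P1_zero_odd (m : ℕ) :
    (P1 (2*m+1) 0)^2 = ((2*(m:ℝ)+1) * bseq m)^2 := by
  set c := 2*m+1 with hcdef
  have hc : 1 ≤ c := by omega
  have hPval : P1 c 0 = K c * a c (c+1) := rfl
  have hc1 : c + 1 = 2*(m+1) := by omega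
  have hval : P1 c 0 = (-1:ℝ)^c * (-1:ℝ)^(m+1) *
      (K c * ∏ i ∈ range (m+1), ((2*(i:ℝ)+1) * (2*(c:ℝ) - 2*(i:ℝ)))) := by
    rw [hPval, show a c (c+1) = a c (2*(m+1)) from by rw [hc1]]
    rw [a_even c hc (m+1)]
    ring
  have hKp := K_mul_prod c (m+1) (by omega) (by positivity)
  have hcm : c - (m+1) = m := by omega
  rw [hcm] at hKp
  have h2c : (2:ℝ)^c = 2 * 2^m * 2^m := by
    rw [hcdef, pow_succ, two_mul, pow_add]; ring
  have hcfact : (Nat.factorial c : ℝ) ≠ 0 := by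
    exact_mod_cast (Nat.factorial_pos c).ne'
  have hmfact : (Nat.factorial m : ℝ) ≠ 0 := by
    exact_mod_cast (Nat.factorial_pos m).ne'
  have h2m : (2:ℝ)^m ≠ 0 := by positivity
  have hprodsucc : ∏ i ∈ range (m+1), (2*(i:ℝ)+1)
      = (∏ i ∈ range m, (2*(i:ℝ)+1)) * (2*(m:ℝ)+1) := by
    rw [prod_range_succ]
  have hred : K c * ∏ i ∈ range (m+1), ((2*(i:ℝ)+1) * (2*(c:ℝ) - 2*(i:ℝ)))
      = (2*(m:ℝ)+1) * bseq m := by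
    rw [hKp, bseq_ratio, h2c, hprodsucc]
    have h2msucc : (2:ℝ)^(m+1) = 2 * 2^m := by rw [pow_succ]; ring
    rw [h2msucc]
    field_simp
  rw [hval, hred]
  have hs1 : ((-1:ℝ)^c)^2 = 1 := by
    rw [← pow_mul, mul_comm c 2, pow_mul]; norm_num
  have hs2 : ((-1:ℝ)^(m+1))^2 = 1 := by
    rw [← pow_mul, mul_comm (m+1) 2, pow_mul]; norm_num
  rw [mul_pow, mul_pow, hs1, hs2]
  ring

end LegAux
namespace LegAux
open Polynomial Finset

lemma ode (c : ℕ) (hc : 1 ≤ c) (t : ℝ) :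
    (1 - t^2) * P2 c t = 2*t*P1 c t - (c:ℝ)*((c:ℝ)+1) * legendreP c t := by
  have h := congrArg (Polynomial.eval t) (Sid c hc c)
  simp only [eval_mul, eval_add, eval_sub, eval_pow, eval_X, eval_one, eval_C] at h
  rw [legendreP_eq]
  show (1 - t^2) * (K c * (B c (c+2)).eval t)
      = 2*t*(K c * (B c (c+1)).eval t) - (c:ℝ)*((c:ℝ)+1) * (K c * (B c c).eval t)
  linear_combination (-(K c)) * h

/-- the energy at the center -/
noncomputable def E0c (c : ℕ) : ℝ :=
  ((c:ℝ)+1/2)^2*(legendreP c 0)^2 + (P1 c 0)^2 + (legendreP c 0)^2/4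

noncomputable def Hfun (c : ℕ) (x : ℝ) : ℝ :=
  ((c:ℝ)+1/2)^2*(legendreP c x)^2 + (1-x^2)*(P1 c x)^2 - x*(legendreP c x)*(P1 c x)
    + (1+x^2)*(legendreP c x)^2/(4*(1-x^2))

noncomputable def Hd (c : ℕ) (x : ℝ) : ℝ :=
  ((c:ℝ)+1/2)^2*(2*legendreP c x*P1 c x)
  + (-(2*x)*(P1 c x)^2 + (1-x^2)*(2*P1 c x*P2 c x))
  - (1*(legendreP c x*P1 c x) + x*(P1 c x*P1 c x + legendreP c x*P2 c x))
  + ((2*x*(legendreP c x)^2 + (1+x^2)*(2*legendreP c x*P1 c x))*(4*(1-x^2))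
      - (1+x^2)*(legendreP c x)^2*(4*(-(2*x))))/(4*(1-x^2))^2

lemma one_sub_sq_pos {x : ℝ} (hx : x ∈ Set.Ioo (-1:ℝ) 1) : 0 < 1 - x^2 := by
  obtain ⟨h1, h2⟩ := hx
  nlinarith

lemma hasDerivAt_one_sub_sq (x : ℝ) : HasDerivAt (fun y : ℝ => 1 - y^2) (-(2*x)) x := by
  have h := (hasDerivAt_pow 2 x).const_sub 1
  refine h.congr_deriv ?_
  push_cast
  ring

lemma hasDerivAt_Hfun (c : ℕ) (x : ℝ) (hx : x ∈ Set.Ioo (-1:ℝ) 1) :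
    HasDerivAt (Hfun c) (Hd c x) x := by
  have hupos := one_sub_sq_pos hx
  have hune : (1:ℝ) - x^2 ≠ 0 := ne_of_gt hupos
  have hp := hasDerivAt_legendreP c
  have hp1 := hasDerivAt_P1 c
  have hA : HasDerivAt (fun y => ((c:ℝ)+1/2)^2*(legendreP c y)^2)
      (((c:ℝ)+1/2)^2*(2*legendreP c x*P1 c x)) x := by
    have h := ((hp x).pow 2).const_mul (((c:ℝ)+1/2)^2)
    refine h.congr_deriv ?_
    push_cast
    ring
  have hB : HasDerivAt (fun y => (1-y^2)*(P1 c y)^2)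
      (-(2*x)*(P1 c x)^2 + (1-x^2)*(2*P1 c x*P2 c x)) x := by
    have h := (hasDerivAt_one_sub_sq x).mul ((hp1 x).pow 2)
    refine h.congr_deriv ?_
    push_cast [Pi.pow_apply]
    ring
  have hC : HasDerivAt (fun y => y*(legendreP c y*P1 c y))
      (1*(legendreP c x*P1 c x) + x*(P1 c x*P1 c x + legendreP c x*P2 c x)) x := by
    have h := (hasDerivAt_id x).mul ((hp x).mul (hp1 x))
    exact h
  have hN : HasDerivAt (fun y => (1+y^2)*(legendreP c y)^2)
      (2*x*(legendreP c x)^2 + (1+x^2)*(2*legendreP c x*P1 c x)) x := by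
    have h := ((hasDerivAt_pow 2 x).const_add 1).mul ((hp x).pow 2)
    refine h.congr_deriv ?_
    push_cast [Pi.pow_apply]
    ring
  have hDen : HasDerivAt (fun y => 4*(1-y^2)) (4*(-(2*x))) x :=
    (hasDerivAt_one_sub_sq x).const_mul 4
  have hDenne : 4*(1-x^2) ≠ 0 := by positivity
  have hQ := hN.div hDen hDenne
  have htot := ((hA.add hB).sub hC).add hQ
  have hfun_eq : Hfun c = fun y =>
      ((c:ℝ)+1/2)^2*(legendreP c y)^2 + (1-y^2)*(P1 c y)^2 - y*(legendreP c y*P1 c y)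
        + (1+y^2)*(legendreP c y)^2/(4*(1-y^2)) := by
    funext y
    rw [Hfun]
    ring
  rw [hfun_eq, Hd]
  exact htot

lemma keyalg (c : ℕ) (hc : 1 ≤ c) (x : ℝ) (hx : x ∈ Set.Ioo (-1:ℝ) 1) :
    -x * Hfun c x + (1-x^2) * Hd c x = x*(legendreP c x)^2/(2*(1-x^2)) := by
  have hupos := one_sub_sq_pos hx
  have hune : (1:ℝ) - x^2 ≠ 0 := ne_of_gt hupos
  have hP2v : P2 c x = (2*x*P1 c x - (c:ℝ)*((c:ℝ)+1)*legendreP c x)/(1-x^2) := by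
    rw [eq_div_iff hune]
    linear_combination ode c hc x
  rw [Hfun, Hd, hP2v]
  field_simp
  ring

noncomputable def Ffun (c : ℕ) (x : ℝ) : ℝ := Real.sqrt (1 - x^2) * Hfun c x

lemma hasDerivAt_Ffun (c : ℕ) (hc : 1 ≤ c) (x : ℝ) (hx : x ∈ Set.Ioo (-1:ℝ) 1) :
    HasDerivAt (Ffun c)
      (x*(legendreP c x)^2/(2*(1-x^2)*Real.sqrt (1-x^2))) x := by
  have hupos := one_sub_sq_pos hx
  have hune : (1:ℝ) - x^2 ≠ 0 := ne_of_gt hupos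
  set s := Real.sqrt (1-x^2) with hsdef
  have hspos : 0 < s := Real.sqrt_pos.mpr hupos
  have hsne : s ≠ 0 := ne_of_gt hspos
  have hs2 : s^2 = 1-x^2 := Real.sq_sqrt (le_of_lt hupos)
  have hsd : HasDerivAt (fun y : ℝ => Real.sqrt (1-y^2)) (-x/s) x := by
    have h2 := (Real.hasDerivAt_sqrt hune).comp x (hasDerivAt_one_sub_sq x)
    have heq : -x/s = 1 / (2 * Real.sqrt (1 - x ^ 2)) * -(2 * x) := by
      rw [← hsdef]
      field_simp
    rw [heq]
    exact h2
  have htot := hsd.mul (hasDerivAt_Hfun c x hx)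
  have hka := keyalg c hc x hx
  have hval : (-x/s)*Hfun c x + s*Hd c x = x*(legendreP c x)^2/(2*(1-x^2)*s) := by
    have h5 : (-x/s)*Hfun c x + s*Hd c x = (-x*Hfun c x + (1-x^2)*Hd c x)/s := by
      rw [← hs2]
      field_simp
    rw [h5, hka, div_div]
  have hF : Ffun c = fun y => Real.sqrt (1-y^2) * Hfun c y := rfl
  rw [hF]
  exact hval ▸ htot

lemma Ffun_zero (c : ℕ) : Ffun c 0 = E0c c := by
  rw [Ffun, Hfun, E0c]
  norm_num

lemma Ffun_root (c : ℕ) (r : ℝ) (hroot : legendreP c r = 0) :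
    Ffun c r = Real.sqrt (1-r^2) * ((1-r^2) * (P1 c r)^2) := by
  rw [Ffun, Hfun, hroot]
  ring

lemma key_bound (c : ℕ) (hc : 1 ≤ c) (r : ℝ) (hr : r ∈ Set.Ioo (-1:ℝ) 1)
    (hroot : legendreP c r = 0) :
    E0c c ≤ Real.sqrt (1-r^2) * ((1-r^2) * (P1 c r)^2) := by
  rw [← Ffun_root c r hroot, ← Ffun_zero c]
  obtain ⟨hr1, hr2⟩ := hr
  rcases le_or_gt 0 r with hr0 | hr0
  · -- monotone on [0, r]
    have hsub : Set.Icc (0:ℝ) r ⊆ Set.Ioo (-1:ℝ) 1 := by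
      intro y hy
      constructor
      · linarith [hy.1]
      · exact lt_of_le_of_lt hy.2 hr2
    have hmono : MonotoneOn (Ffun c) (Set.Icc 0 r) := by
      apply monotoneOn_of_deriv_nonneg (convex_Icc 0 r)
      · intro y hy
        exact ((hasDerivAt_Ffun c hc y (hsub hy)).differentiableAt).continuousAt.continuousWithinAt
      · intro y hy
        rw [interior_Icc] at hy
        have hy' : y ∈ Set.Icc (0:ℝ) r := ⟨le_of_lt hy.1, le_of_lt hy.2⟩
        exact ((hasDerivAt_Ffun c hc y (hsub hy')).differentiableAt).differentiableWithinAt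
      · intro y hy
        rw [interior_Icc] at hy
        have hy' : y ∈ Set.Ioo (-1:ℝ) 1 := hsub ⟨le_of_lt hy.1, le_of_lt hy.2⟩
        rw [(hasDerivAt_Ffun c hc y hy').deriv]
        have h1 : 0 < 1 - y^2 := one_sub_sq_pos hy'
        have h2 : 0 < Real.sqrt (1-y^2) := Real.sqrt_pos.mpr h1
        apply div_nonneg
        · have : 0 ≤ y := le_of_lt hy.1
          positivity
        · positivity
    exact hmono ⟨le_rfl, hr0⟩ ⟨hr0, le_rfl⟩ hr0
  · -- antitone on [r, 0]
    have hsub : Set.Icc r (0:ℝ) ⊆ Set.Ioo (-1:ℝ) 1 := by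
      intro y hy
      constructor
      · exact lt_of_lt_of_le hr1 hy.1
      · linarith [hy.2]
    have hanti : AntitoneOn (Ffun c) (Set.Icc r 0) := by
      apply antitoneOn_of_deriv_nonpos (convex_Icc r 0)
      · intro y hy
        exact ((hasDerivAt_Ffun c hc y (hsub hy)).differentiableAt).continuousAt.continuousWithinAt
      · intro y hy
        rw [interior_Icc] at hy
        have hy' : y ∈ Set.Icc r (0:ℝ) := ⟨le_of_lt hy.1, le_of_lt hy.2⟩
        exact ((hasDerivAt_Ffun c hc y (hsub hy')).differentiableAt).differentiableWithinAt
      · intro y hy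
        rw [interior_Icc] at hy
        have hy' : y ∈ Set.Ioo (-1:ℝ) 1 := hsub ⟨le_of_lt hy.1, le_of_lt hy.2⟩
        rw [(hasDerivAt_Ffun c hc y hy').deriv]
        have h1 : 0 < 1 - y^2 := one_sub_sq_pos hy'
        have h2 : 0 < Real.sqrt (1-y^2) := Real.sqrt_pos.mpr h1
        apply div_nonpos_of_nonpos_of_nonneg
        · have hyneg : y ≤ 0 := le_of_lt hy.2
          have : 0 ≤ (legendreP c y)^2 := sq_nonneg _
          nlinarith
        · positivity
    exact hanti ⟨le_rfl, le_of_lt hr0⟩ ⟨le_of_lt hr0, le_rfl⟩ (le_of_lt hr0)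

end LegAux
namespace LegAux
open Polynomial Finset

lemma E0_gt (c : ℕ) (hc : 1 ≤ c) : 2*(c:ℝ)/π < E0c c := by
  have hpi := Real.pi_pos
  rw [div_lt_iff₀ hpi]
  rcases Nat.even_or_odd c with hev | hodd
  · obtain ⟨m, hm⟩ := hev
    have hmc : c = 2*m := by omega
    have hm1 : 1 ≤ m := by omega
    have hP0 : (legendreP c 0)^2 = (bseq m)^2 := by
      rw [hmc]; exact sq_legendreP_zero_even m hm1
    have hw := wallis m
    have hcast : (c:ℝ) = 2*(m:ℝ) := by rw [hmc]; push_cast; ring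
    have hW : 0 ≤ (m:ℝ) * (π*((2*(m:ℝ)+1)*(bseq m)^2) - 2) :=
      mul_nonneg (by positivity) (by linarith)
    have hid : E0c c * π - 2*(c:ℝ)
        = 2*(m:ℝ)*(π*((2*(m:ℝ)+1)*(bseq m)^2) - 2) + (π*(bseq m)^2)/2
          + π*(P1 c 0)^2 := by
      rw [E0c, hP0, hcast]
      ring
    have h1 : 0 < π*(bseq m)^2 := by
      have := bseq_pos m
      positivity
    have h2 : 0 ≤ π*(P1 c 0)^2 := by positivity
    linarith
  · obtain ⟨m, hm⟩ := hodd
    have hP0 : legendreP c 0 = 0 := by rw [hm]; exact legendreP_zero_odd m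
    have hP1 : (P1 c 0)^2 = ((2*(m:ℝ)+1) * bseq m)^2 := by
      rw [hm]; exact sq_P1_zero_odd m
    have hw := wallis m
    have hcast : (c:ℝ) = 2*(m:ℝ)+1 := by rw [hm]; push_cast; ring
    have hm0 : (0:ℝ) ≤ 2*(m:ℝ)+1 := by positivity
    have hid : E0c c * π - 2*(c:ℝ)
        = (2*(m:ℝ)+1)*(π*((2*(m:ℝ)+1)*(bseq m)^2) - 2) := by
      rw [E0c, hP0, hP1, hcast]
      ring
    nlinarith [mul_nonneg hm0 (le_of_lt (sub_pos.mpr hw))]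

end LegAux


/-- For every `c ≥ 1`, the normalizing constant satisfies `N_c < π`. -/
theorem N_lt_pi (x : ℕ → ℕ → ℝ) (hx : IsLegendreRootSystem x)
    (c : ℕ) (hc : 1 ≤ c) :
    NLeg x c < π := by
  obtain ⟨hroots, -, -⟩ := hx c hc
  have hE := LegAux.E0_gt c hc
  have hpi := Real.pi_pos
  have hcpos : (0:ℝ) < c := by exact_mod_cast hc
  have hE0pos : 0 < LegAux.E0c c := lt_trans (by positivity) hE
  have hbound : ∀ k ∈ Finset.Icc 1 c, wLeg x k c ≤ 2 / LegAux.E0c c := by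
    intro k hk
    rw [Finset.mem_Icc] at hk
    obtain ⟨hmem, hzero⟩ := hroots k hk.1 hk.2
    have hkey := LegAux.key_bound c hc _ hmem hzero
    have hupos := LegAux.one_sub_sq_pos hmem
    rw [wLeg]
    have hrpow : (1 - x k c ^ 2) ^ ((3:ℝ)/2)
        = Real.sqrt (1 - x k c ^2) * (1 - x k c ^2) := by
      rw [show (3:ℝ)/2 = 1 + 1/2 by norm_num, Real.rpow_add hupos, Real.rpow_one,
        ← Real.sqrt_eq_rpow]
      ring
    rw [hrpow, LegAux.deriv_legendreP]
    have hden : LegAux.E0c c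
        ≤ Real.sqrt (1 - x k c ^2) * (1 - x k c ^2) * (LegAux.P1 c (x k c))^2 := by
      calc LegAux.E0c c
          ≤ Real.sqrt (1-(x k c)^2) * ((1-(x k c)^2) * (LegAux.P1 c (x k c))^2) := hkey
        _ = _ := by ring
    gcongr
  have hsum : NLeg x c ≤ (c:ℝ) * (2 / LegAux.E0c c) := by
    calc NLeg x c ≤ ∑ _k ∈ Finset.Icc 1 c, 2 / LegAux.E0c c :=
          Finset.sum_le_sum hbound
      _ = (c:ℝ) * (2 / LegAux.E0c c) := by
          rw [Finset.sum_const, Nat.card_Icc]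
          simp [nsmul_eq_mul]
  have hfinal : (c:ℝ) * (2 / LegAux.E0c c) < π := by
    rw [mul_div_assoc'] at *
    rw [div_lt_iff₀ hE0pos]
    rw [div_lt_iff₀ hpi] at hE
    linarith [hE]
  linarith
end

section
/- For every positive integer m, the (2m)-th derivative of the function f(x) = (1 − x²)^{−1/2} is strictly positive at every point x of the open interval (−1, 1). -/
open Real Set

noncomputable def fIA : ℝ → ℝ := fun t : ℝ => (1 - t ^ 2) ^ (-(1 : ℝ) / 2)

lemma fIA_base_pos {x : ℝ} (hx : x ∈ Set.Ioo (-1 : ℝ) 1) : 0 < 1 - x ^ 2 := by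
  nlinarith [hx.1, hx.2]

lemma fIA_smoothAt {x : ℝ} (hx : x ∈ Set.Ioo (-1 : ℝ) 1) : ContDiffAt ℝ (⊤ : ℕ∞) fIA x := by
  apply ContDiffAt.rpow_const_of_ne
  · exact (contDiff_const.sub (contDiff_id.pow 2)).contDiffAt
  · exact (fIA_base_pos hx).ne'

lemma deriv_smoothAt {f : ℝ → ℝ} {x : ℝ} (hf : ContDiffAt ℝ (⊤ : ℕ∞) f x) :
    ContDiffAt ℝ (⊤ : ℕ∞) (deriv f) x := by
  have h := hf.fderiv_right (m := (⊤ : ℕ∞)) (by exact_mod_cast le_top)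
  have h2 := (ContinuousLinearMap.apply ℝ ℝ 1).contDiff.contDiffAt.comp x h
  exact h2.congr_of_eventuallyEq (by
    filter_upwards with y
    exact (fderiv_apply_one_eq_deriv).symm)

lemma fIA_iter_smoothAt (n : ℕ) {x : ℝ} (hx : x ∈ Set.Ioo (-1 : ℝ) 1) :
    ContDiffAt ℝ (⊤ : ℕ∞) (iteratedDeriv n fIA) x := by
  induction n with
  | zero => simpa [iteratedDeriv_zero] using fIA_smoothAt hx
  | succ n ih => rw [iteratedDeriv_succ]; exact deriv_smoothAt ih

lemma fIA_hasDerivAt (n : ℕ) {x : ℝ} (hx : x ∈ Set.Ioo (-1 : ℝ) 1) :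
    HasDerivAt (iteratedDeriv n fIA) (iteratedDeriv (n + 1) fIA x) x := by
  have h := ((fIA_iter_smoothAt n hx).differentiableAt (by simp)).hasDerivAt
  rwa [iteratedDeriv_succ]

lemma fIA_ode {x : ℝ} (hx : x ∈ Set.Ioo (-1 : ℝ) 1) :
    (1 - x ^ 2) * deriv fIA x = x * fIA x := by
  have hb := fIA_base_pos hx
  have h1 : HasDerivAt (fun t : ℝ => 1 - t ^ 2) (-(2 * x)) x := by
    simpa using ((hasDerivAt_pow 2 x).const_sub 1)
  have h2 := h1.rpow_const (p := -(1 : ℝ) / 2) (Or.inl hb.ne')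
  have hd : deriv fIA x = -(2 * x) * (-(1 : ℝ) / 2) * (1 - x ^ 2) ^ (-(1 : ℝ) / 2 - 1) :=
    h2.deriv
  rw [hd]
  show _ = x * (1 - x ^ 2) ^ (-(1 : ℝ) / 2)
  rw [show (-(1 : ℝ) / 2 - 1) = (-(1 : ℝ) / 2) + (-1) by ring, Real.rpow_add hb,
    Real.rpow_neg_one]
  field_simp

lemma fIA_recur (n : ℕ) : ∀ x ∈ Set.Ioo (-1 : ℝ) 1,
    (1 - x ^ 2) * iteratedDeriv (n + 1) fIA x
      = (2 * (n : ℝ) + 1) * x * iteratedDeriv n fIA x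
        + (n : ℝ) ^ 2 * iteratedDeriv (n - 1) fIA x := by
  induction n with
  | zero =>
    intro x hx
    simpa [iteratedDeriv_one, iteratedDeriv_zero] using fIA_ode hx
  | succ n ih =>
    intro x hx
    set G : ℝ → ℝ := fun y => (1 - y ^ 2) * iteratedDeriv (n + 1) fIA y
      - ((2 * (n : ℝ) + 1) * y * iteratedDeriv n fIA y
        + (n : ℝ) ^ 2 * iteratedDeriv (n - 1) fIA y) with hGdef
    have hG0 : ∀ y ∈ Set.Ioo (-1 : ℝ) 1, G y = 0 := by
      intro y hy
      rw [hGdef]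
      simp only
      rw [ih y hy]
      ring
    have hev : G =ᶠ[nhds x] (fun _ => 0) :=
      Filter.eventuallyEq_of_mem (isOpen_Ioo.mem_nhds hx) hG0
    have hder0 : deriv G x = 0 := by rw [hev.deriv_eq]; simp
    have h1 : HasDerivAt (fun t : ℝ => 1 - t ^ 2) (-(2 * x)) x := by
      simpa using ((hasDerivAt_pow 2 x).const_sub 1)
    have hA := h1.mul (fIA_hasDerivAt (n + 1) hx)
    have hB := (((hasDerivAt_id x).const_mul (2 * (n : ℝ) + 1))).mul (fIA_hasDerivAt n hx)
    have hC : HasDerivAt (fun y => (n : ℝ) ^ 2 * iteratedDeriv (n - 1) fIA y)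
        ((n : ℝ) ^ 2 * iteratedDeriv n fIA x) x := by
      have h := (fIA_hasDerivAt (n - 1) hx).const_mul ((n : ℝ) ^ 2)
      rcases Nat.eq_zero_or_pos n with rfl | hn
      · simpa using h
      · rwa [Nat.sub_add_cancel hn] at h
    have hG : HasDerivAt G
        ((-(2 * x) * iteratedDeriv (n + 1) fIA x
          + (1 - x ^ 2) * iteratedDeriv (n + 1 + 1) fIA x)
          - ((2 * (n : ℝ) + 1) * 1 * iteratedDeriv n fIA x
            + (2 * (n : ℝ) + 1) * x * iteratedDeriv (n + 1) fIA x
            + (n : ℝ) ^ 2 * iteratedDeriv n fIA x)) x := by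
      have := hA.sub (hB.add hC)
      convert this using 1
      all_goals rfl
    have hkey := hG.deriv
    rw [hder0] at hkey
    simp only [Nat.add_sub_cancel]
    push_cast
    linear_combination -hkey

lemma fIA_pos (n : ℕ) : ∀ x : ℝ, 0 ≤ x → x < 1 →
    0 ≤ iteratedDeriv n fIA x ∧ ((0 < x ∨ Even n) → 0 < iteratedDeriv n fIA x) := by
  induction n using Nat.strong_induction_on with
  | _ n ih =>
    match n with
    | 0 =>
      intro x hx0 hx1
      have hb : 0 < 1 - x ^ 2 := fIA_base_pos ⟨by linarith, hx1⟩
      have hp : 0 < fIA x := Real.rpow_pos_of_pos hb _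
      rw [iteratedDeriv_zero]
      exact ⟨hp.le, fun _ => hp⟩
    | 1 =>
      intro x hx0 hx1
      have hx : x ∈ Set.Ioo (-1 : ℝ) 1 := ⟨by linarith, hx1⟩
      have hb := fIA_base_pos hx
      have hp : 0 < fIA x := Real.rpow_pos_of_pos hb _
      have hode := fIA_ode hx
      have h1 : iteratedDeriv 1 fIA x = x * fIA x / (1 - x ^ 2) := by
        rw [iteratedDeriv_one]
        field_simp
        linarith [hode]
      rw [h1]
      refine ⟨by positivity, ?_⟩
      rintro (h | h)
      · positivity
      · exact absurd h (by decide)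
    | n + 2 =>
      intro x hx0 hx1
      have hx : x ∈ Set.Ioo (-1 : ℝ) 1 := ⟨by linarith, hx1⟩
      have hb := fIA_base_pos hx
      have hrec := fIA_recur (n + 1) x hx
      simp only [Nat.add_sub_cancel] at hrec
      have ih1 := ih (n + 1) (by omega) x hx0 hx1
      have ih0 := ih n (by omega) x hx0 hx1
      have heq : iteratedDeriv (n + 2) fIA x
          = ((2 * ((n : ℝ) + 1) + 1) * x * iteratedDeriv (n + 1) fIA x
            + ((n : ℝ) + 1) ^ 2 * iteratedDeriv n fIA x) / (1 - x ^ 2) := by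
        have hidx : iteratedDeriv (n + 1 + 1) fIA x = iteratedDeriv (n + 2) fIA x := rfl
        rw [hidx] at hrec
        push_cast at hrec
        field_simp
        linarith [hrec]
      have hterm1 : 0 ≤ (2 * ((n : ℝ) + 1) + 1) * x * iteratedDeriv (n + 1) fIA x := by
        have := ih1.1; positivity
      constructor
      · rw [heq]
        have := ih0.1
        positivity
      · intro h
        have hn : 0 < x ∨ Even n := by
          rcases h with h | h
          · exact Or.inl h
          · exact Or.inr (by simpa [Nat.even_add_one, parity_simps] using h)
        have h0 : 0 < iteratedDeriv n fIA x := ih0.2 hn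
        rw [heq]
        apply div_pos _ hb
        have : 0 < ((n : ℝ) + 1) ^ 2 * iteratedDeriv n fIA x := by positivity
        linarith

/-- For every positive integer `m`, the `(2m)`-th derivative of
`f(x) = (1 − x²)^{−1/2}` is strictly positive at every `x ∈ (−1, 1)`. -/
theorem even_iteratedDeriv_pos (m : ℕ) (hm : 1 ≤ m) (x : ℝ)
    (hx : x ∈ Set.Ioo (-1 : ℝ) 1) :
    0 < iteratedDeriv (2 * m) (fun t : ℝ => (1 - t ^ 2) ^ (-(1 : ℝ) / 2)) x := by
  have key : ∀ y : ℝ, 0 ≤ y → y < 1 → 0 < iteratedDeriv (2 * m) fIA y := fun y h1 h2 =>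
    (fIA_pos (2 * m) y h1 h2).2 (Or.inr (even_two_mul m))
  show 0 < iteratedDeriv (2 * m) fIA x
  rcases le_or_gt 0 x with h | h
  · exact key x h hx.2
  · have hfe : (fun t : ℝ => fIA (-t)) = fIA := by
      funext t
      show ((1 : ℝ) - (-t) ^ 2) ^ (-(1 : ℝ) / 2) = _
      rw [neg_sq]
      rfl
    have hcomp := iteratedDeriv_comp_neg (2 * m) fIA x
    rw [hfe] at hcomp
    rw [hcomp]
    simp only [Even.neg_pow (even_two_mul m), one_pow, smul_eq_mul, one_mul]
    exact key (-x) (by linarith) (by linarith [hx.1])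
end
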